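/- arXiv:1207.4736 — 3 statements merged into one kernel-verified Lean document; each statement's English description precedes it below -/
import Mathlib

section
/- Let θ ≥ 0 be a random variable with finite mean on a filtered probability space and let τ be a stopping time with finite mean. Then E[|θ - τ|] = E[∫₀^τ (2 P(θ ≤ t | ℱ_t) - 1) dt] + E[θ]. -/
open MeasureTheory Filter Set

lemma point_calc (a c : ℝ) (ha : 0 ≤ a) (hc : 0 ≤ c) :
    ∫ t in Set.Ioc (0:ℝ) c, (2 * (Set.Ici a).indicator (fun _ => (1:ℝ)) t - 1) = |a - c| - a := by
  have hind : IntegrableOn ((Set.Ici a).indicator (fun _ => (1:ℝ))) (Set.Ioc (0:ℝ) c) volume :=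
    ((integrableOn_const measure_Ioc_lt_top.ne) :
      IntegrableOn (fun _ => (1:ℝ)) (Set.Ioc (0:ℝ) c) volume).indicator measurableSet_Ici
  have hone : IntegrableOn (fun _ => (1:ℝ)) (Set.Ioc (0:ℝ) c) volume :=
    integrableOn_const measure_Ioc_lt_top.ne
  have hsplit : ∫ t in Set.Ioc (0:ℝ) c, (2 * (Set.Ici a).indicator (fun _ => (1:ℝ)) t - 1)
      = 2 * (∫ t in Set.Ioc (0:ℝ) c, (Set.Ici a).indicator (fun _ => (1:ℝ)) t)
        - (volume (Set.Ioc (0:ℝ) c)).toReal := by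
    rw [integral_sub (hind.const_mul 2) hone, integral_const_mul, setIntegral_const]
    simp [ENNReal.toReal_ofReal hc, hc]
  have hkey : ∫ t in Set.Ioc (0:ℝ) c, (Set.Ici a).indicator (fun _ => (1:ℝ)) t
      = (volume (Set.Ioc (0:ℝ) c ∩ Set.Ici a)).toReal := by
    rw [setIntegral_indicator measurableSet_Ici, setIntegral_const]
    simp
    rfl
  rw [hsplit, hkey, Real.volume_Ioc]
  rcases le_or_gt a c with hac | hac
  · rcases ha.eq_or_lt with ha0 | ha0
    · have : Set.Ioc (0:ℝ) c ∩ Set.Ici a = Set.Ioc 0 c := by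
        rw [Set.inter_eq_left]
        intro t ht; exact le_trans ha0.symm.le ht.1.le
      rw [this, Real.volume_Ioc, ENNReal.toReal_ofReal (show (0:ℝ) ≤ c - 0 by linarith),
        ← ha0, abs_of_nonpos (by linarith)]
      ring
    · have : Set.Ioc (0:ℝ) c ∩ Set.Ici a = Set.Icc a c := by
        ext t
        simp only [Set.mem_inter_iff, Set.mem_Ioc, Set.mem_Ici, Set.mem_Icc]
        constructor
        · rintro ⟨⟨_, h2⟩, h3⟩; exact ⟨h3, h2⟩
        · rintro ⟨h1, h2⟩; exact ⟨⟨lt_of_lt_of_le ha0 h1, h2⟩, h1⟩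
      rw [this, Real.volume_Icc, ENNReal.toReal_ofReal (show (0:ℝ) ≤ c - a by linarith),
        ENNReal.toReal_ofReal (show (0:ℝ) ≤ c - 0 by linarith), abs_of_nonpos (by linarith)]
      ring
  · have : Set.Ioc (0:ℝ) c ∩ Set.Ici a = ∅ := by
      ext t
      simp only [Set.mem_inter_iff, Set.mem_Ioc, Set.mem_Ici, Set.mem_empty_iff_false, iff_false]
      rintro ⟨⟨_, h2⟩, h3⟩; linarith
    rw [this]
    simp only [measure_empty, ENNReal.toReal_zero]
    rw [ENNReal.toReal_ofReal (show (0:ℝ) ≤ c - 0 by linarith), abs_of_nonneg (by linarith)]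
    ring

/-- Let `θ ≥ 0` be a random variable with finite mean on a filtered probability space and let
`τ` be a stopping time with finite mean. Then
`E[|θ - τ|] = E[∫₀^τ (2 P(θ ≤ t | ℱ_t) - 1) dt] + E[θ]`,
where `P(θ ≤ t | ℱ_t)` is the conditional expectation of the indicator of `{θ ≤ t}`
given `ℱ t`, and the integrand process is assumed jointly measurable. -/
theorem stmt1 {Ω : Type*} {m : MeasurableSpace Ω} (P : Measure Ω) [IsProbabilityMeasure P]
    (ℱ : Filtration ℝ m) (θ τ : Ω → ℝ)
    (hθ0 : ∀ ω, 0 ≤ θ ω) (hτ0 : ∀ ω, 0 ≤ τ ω)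
    (hθint : Integrable θ P) (hτint : Integrable τ P)
    (hτ : IsStoppingTime ℱ (fun ω => (τ ω : WithTop ℝ)))
    (hjm : Measurable (fun p : ℝ × Ω =>
      (P[Set.indicator {ω' : Ω | θ ω' ≤ p.1} (fun _ => (1:ℝ)) | ℱ p.1]) p.2)) :
    ∫ ω, |θ ω - τ ω| ∂P =
      (∫ ω, (∫ t in Set.Ioc (0:ℝ) (τ ω),
        (2 * (P[Set.indicator {ω' : Ω | θ ω' ≤ t} (fun _ => (1:ℝ)) | ℱ t]) ω - 1)) ∂P)
      + ∫ ω, θ ω ∂P := by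
  classical
  set f : ℝ × Ω → ℝ := fun p =>
    (P[Set.indicator {ω' : Ω | θ ω' ≤ p.1} (fun _ => (1:ℝ)) | ℱ p.1]) p.2 with hf_def
  -- measurable version of θ
  obtain ⟨θ', hθ'm, hθ'⟩ : ∃ θ' : Ω → ℝ, Measurable θ' ∧ θ =ᵐ[P] θ' :=
    ⟨hθint.1.mk θ, hθint.1.stronglyMeasurable_mk.measurable, hθint.1.ae_eq_mk⟩
  -- τ is measurable
  have hτm : Measurable τ :=
    measurable_of_Iic fun t => by
      have h := ℱ.le t _ (hτ.measurableSet_le t)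
      convert h using 1
      ext ω; simp
  -- the indicator functions are integrable
  have hind_eq : ∀ t : ℝ, (Set.indicator {ω' : Ω | θ ω' ≤ t} (fun _ => (1:ℝ)))
      =ᵐ[P] (Set.indicator {ω' : Ω | θ' ω' ≤ t} (fun _ => (1:ℝ))) := by
    intro t
    filter_upwards [hθ'] with ω hω
    simp only [Set.indicator_apply, Set.mem_setOf_eq, hω]
  have hint : ∀ t : ℝ, Integrable (Set.indicator {ω' : Ω | θ ω' ≤ t} (fun _ => (1:ℝ))) P := by
    intro t
    refine Integrable.congr ?_ (hind_eq t).symm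
    exact (integrable_const (1:ℝ)).indicator (hθ'm measurableSet_Iic)
  -- f is in [0,1] a.e. for each t
  have hf01 : ∀ t : ℝ, ∀ᵐ ω ∂P, 0 ≤ f (t, ω) ∧ f (t, ω) ≤ 1 := by
    intro t
    have h0 : (0:Ω → ℝ) ≤ᵐ[P] P[Set.indicator {ω' : Ω | θ ω' ≤ t} (fun _ => (1:ℝ)) | ℱ t] :=
      condExp_nonneg (ae_of_all _ fun ω => Set.indicator_nonneg (fun _ _ => zero_le_one) ω)
    have h1 : P[Set.indicator {ω' : Ω | θ ω' ≤ t} (fun _ => (1:ℝ)) | ℱ t]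
        ≤ᵐ[P] P[(fun _ => (1:ℝ)) | ℱ t] :=
      condExp_mono (hint t) (integrable_const 1)
        (ae_of_all _ fun ω => Set.indicator_le_self' (fun _ _ => zero_le_one) ω)
    have hc : P[(fun _ : Ω => (1:ℝ)) | ℱ t] = fun _ => (1:ℝ) := condExp_const (ℱ.le t) 1
    rw [hc] at h1
    filter_upwards [h0, h1] with ω h0' h1'
    exact ⟨h0', h1'⟩
  -- the set A where the time variable is in (0, τ ω]
  set A : Set (Ω × ℝ) := {p : Ω × ℝ | p.2 ∈ Set.Ioc 0 (τ p.1)} with hA_def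
  have hA : MeasurableSet A := by
    apply MeasurableSet.inter
    · exact measurableSet_lt measurable_const measurable_snd
    · exact measurableSet_le measurable_snd (hτm.comp measurable_fst)
  -- the product measure of A is finite
  have hAfin : (P.prod volume) A < ⊤ := by
    rw [Measure.prod_apply hA]
    have hpre : ∀ ω, volume (Prod.mk ω ⁻¹' A) = ENNReal.ofReal (τ ω) := by
      intro ω
      have : Prod.mk ω ⁻¹' A = Set.Ioc 0 (τ ω) := rfl
      rw [this, Real.volume_Ioc]
      simp
    calc ∫⁻ ω, volume (Prod.mk ω ⁻¹' A) ∂P = ∫⁻ ω, ENNReal.ofReal (τ ω) ∂P :=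
          lintegral_congr hpre
      _ = ∫⁻ ω, ‖τ ω‖₊ ∂P := by
          refine lintegral_congr fun ω => ?_
          exact (Real.enorm_eq_ofReal (hτ0 ω)).symm
      _ < ⊤ := hτint.2
  have hIndInt : Integrable (A.indicator (fun _ => (1:ℝ))) (P.prod volume) :=
    (integrable_indicator_iff hA).2 (integrableOn_const hAfin.ne)
  -- the two integrands on the product space
  set H : Ω × ℝ → ℝ := A.indicator (fun q => 2 * f (q.2, q.1) - 1) with hH_def
  set G : Ω × ℝ → ℝ := A.indicator
    (fun q => 2 * (Set.indicator {ω' : Ω | θ ω' ≤ q.2} (fun _ => (1:ℝ)) q.1) - 1) with hG_def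
  have hHm : Measurable H :=
    (((hjm.comp measurable_swap).const_mul 2).sub measurable_const).indicator hA
  -- a.e. bound on f over the product measure
  have hfae : ∀ᵐ p ∂(P.prod volume), 0 ≤ f (p.2, p.1) ∧ f (p.2, p.1) ≤ 1 := by
    have hSm : MeasurableSet {p : ℝ × Ω | ¬ (0 ≤ f p ∧ f p ≤ 1)} := by
      apply MeasurableSet.compl
      exact (measurableSet_le measurable_const hjm).inter (measurableSet_le hjm measurable_const)
    have hS : (volume.prod P) {p : ℝ × Ω | ¬ (0 ≤ f p ∧ f p ≤ 1)} = 0 := by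
      rw [Measure.measure_prod_null hSm]
      refine ae_of_all _ fun t => ?_
      show P (Prod.mk t ⁻¹' {p : ℝ × Ω | ¬ (0 ≤ f p ∧ f p ≤ 1)}) = 0
      have : Prod.mk t ⁻¹' {p : ℝ × Ω | ¬ (0 ≤ f p ∧ f p ≤ 1)}
          = {ω : Ω | ¬ (0 ≤ f (t, ω) ∧ f (t, ω) ≤ 1)} := rfl
      rw [this, ← ae_iff]
      exact hf01 t
    rw [ae_iff]
    have hswap : {p : Ω × ℝ | ¬ (0 ≤ f (p.2, p.1) ∧ f (p.2, p.1) ≤ 1)}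
        = Prod.swap ⁻¹' {p : ℝ × Ω | ¬ (0 ≤ f p ∧ f p ≤ 1)} := rfl
    rw [hswap, ← Measure.prod_swap,
      Measure.map_apply measurable_swap (hSm.preimage measurable_swap)]
    have : Prod.swap ⁻¹' (Prod.swap ⁻¹' {p : ℝ × Ω | ¬ (0 ≤ f p ∧ f p ≤ 1)})
        = {p : ℝ × Ω | ¬ (0 ≤ f p ∧ f p ≤ 1)} := by
      ext p; simp
    rw [this]
    exact hS
  -- integrability of H on the product space
  have hHint : Integrable H (P.prod volume) := by
    refine Integrable.mono' (hIndInt.const_mul 3) hHm.aestronglyMeasurable ?_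
    filter_upwards [hfae] with p hp
    by_cases hpA : p ∈ A
    · rw [hH_def]
      simp only [Set.indicator_of_mem hpA, Real.norm_eq_abs]
      rw [abs_le]
      constructor <;> nlinarith [hp.1, hp.2]
    · rw [hH_def]
      simp only [Set.indicator_of_notMem hpA, Real.norm_eq_abs, abs_zero]
      positivity
  -- measurable version and integrability of G
  set G' : Ω × ℝ → ℝ := A.indicator
    (fun q => 2 * (Set.indicator {ω' : Ω | θ' ω' ≤ q.2} (fun _ => (1:ℝ)) q.1) - 1) with hG'_def
  have hG'm : Measurable G' := by
    apply Measurable.indicator _ hA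
    apply Measurable.sub _ measurable_const
    apply Measurable.const_mul
    have : (fun q : Ω × ℝ => Set.indicator {ω' : Ω | θ' ω' ≤ q.2} (fun _ => (1:ℝ)) q.1)
        = Set.indicator {q : Ω × ℝ | θ' q.1 ≤ q.2} (fun _ => (1:ℝ)) := by
      funext q; simp [Set.indicator_apply]
    rw [this]
    exact measurable_const.indicator
      (measurableSet_le (hθ'm.comp measurable_fst) measurable_snd)
  have hGG' : G =ᵐ[P.prod volume] G' := by
    have hnull : (P.prod volume) (({ω : Ω | ¬ θ ω = θ' ω} ×ˢ (Set.univ : Set ℝ)) : Set (Ω × ℝ))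
        = 0 := by
      rw [Measure.prod_prod]
      have h0 : P {ω : Ω | ¬ θ ω = θ' ω} = 0 := ae_iff.mp hθ'
      rw [h0, zero_mul]
    have hsub : {p : Ω × ℝ | ¬ G p = G' p}
        ⊆ ({ω : Ω | ¬ θ ω = θ' ω} ×ˢ (Set.univ : Set ℝ) : Set (Ω × ℝ)) := by
      intro p hp
      refine ⟨fun heq => hp ?_, Set.mem_univ _⟩
      rw [hG_def, hG'_def]
      simp only [Set.indicator_apply, Set.mem_setOf_eq, heq]
    exact measure_mono_null hsub hnull
  have hGint : Integrable G (P.prod volume) := by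
    refine Integrable.mono' (hIndInt.const_mul 3)
      (hG'm.aestronglyMeasurable.congr hGG'.symm) ?_
    refine ae_of_all _ fun p => ?_
    by_cases hpA : p ∈ A
    · rw [hG_def]
      simp only [Set.indicator_of_mem hpA, Real.norm_eq_abs, Set.indicator_apply,
        Set.mem_setOf_eq]
      rw [abs_le]
      constructor <;> split_ifs <;> norm_num
    · rw [hG_def]
      simp only [Set.indicator_of_notMem hpA, Real.norm_eq_abs, abs_zero]
      positivity
  -- Fubini
  have swap1 : ∫ ω, ∫ t, H (ω, t) ∂volume ∂P = ∫ t, ∫ ω, H (ω, t) ∂P ∂volume :=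
    integral_integral_swap hHint
  have swap2 : ∫ ω, ∫ t, G (ω, t) ∂volume ∂P = ∫ t, ∫ ω, G (ω, t) ∂P ∂volume :=
    integral_integral_swap hGint
  -- slice equality using the stopping time property
  have key : ∀ t : ℝ, ∫ ω, H (ω, t) ∂P = ∫ ω, G (ω, t) ∂P := by
    intro t
    by_cases ht : 0 < t
    · have hSt : MeasurableSet[ℱ t] {ω : Ω | t ≤ τ ω} := by
          have h := hτ.measurableSet_ge t
          simpa using h
      have hStm : MeasurableSet {ω : Ω | t ≤ τ ω} := ℱ.le t _ hSt
      have hmem : ∀ ω : Ω, (ω, t) ∈ A ↔ ω ∈ {ω : Ω | t ≤ τ ω} := by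
        intro ω
        simp [hA_def, Set.mem_Ioc, ht]
      have hH' : (fun ω => H (ω, t))
          = {ω : Ω | t ≤ τ ω}.indicator (fun ω => 2 * f (t, ω) - 1) := by
        funext ω
        by_cases h : ω ∈ {ω : Ω | t ≤ τ ω}
        · rw [Set.indicator_of_mem h, hH_def, Set.indicator_of_mem ((hmem ω).2 h)]
        · rw [Set.indicator_of_notMem h, hH_def,
            Set.indicator_of_notMem (fun hh => h ((hmem ω).1 hh))]
      have hG2 : (fun ω => G (ω, t)) = {ω : Ω | t ≤ τ ω}.indicator
          (fun ω => 2 * (Set.indicator {ω' : Ω | θ ω' ≤ t} (fun _ => (1:ℝ)) ω) - 1) := by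
        funext ω
        by_cases h : ω ∈ {ω : Ω | t ≤ τ ω}
        · rw [Set.indicator_of_mem h, hG_def, Set.indicator_of_mem ((hmem ω).2 h)]
        · rw [Set.indicator_of_notMem h, hG_def,
            Set.indicator_of_notMem (fun hh => h ((hmem ω).1 hh))]
      rw [hH', hG2, integral_indicator hStm, integral_indicator hStm]
      have hone : IntegrableOn (fun _ : Ω => (1:ℝ)) {ω : Ω | t ≤ τ ω} P :=
        integrableOn_const (measure_lt_top P _).ne
      have hfint : IntegrableOn (fun ω => f (t, ω)) {ω : Ω | t ≤ τ ω} P := by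
        have h := (integrable_condExp :
          Integrable (P[Set.indicator {ω' : Ω | θ ω' ≤ t} (fun _ => (1:ℝ)) | ℱ t]) P)
        exact h.integrableOn
      have hiint : IntegrableOn (Set.indicator {ω' : Ω | θ ω' ≤ t} (fun _ => (1:ℝ)))
          {ω : Ω | t ≤ τ ω} P := (hint t).integrableOn
      rw [integral_sub (hfint.const_mul 2) hone, integral_sub (hiint.const_mul 2) hone,
        integral_const_mul, integral_const_mul]
      congr 2
      exact setIntegral_condExp (ℱ.le t) (hint t) hSt
    · have hz : ∀ ω : Ω, (ω, t) ∉ A := by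
        intro ω h
        exact ht h.1
      have h1 : (fun ω => H (ω, t)) = fun _ => (0:ℝ) := by
        funext ω; rw [hH_def, Set.indicator_of_notMem (hz ω)]
      have h2 : (fun ω => G (ω, t)) = fun _ => (0:ℝ) := by
        funext ω; rw [hG_def, Set.indicator_of_notMem (hz ω)]
      rw [h1, h2]
  -- pointwise identification of the inner integrals
  have hconst : ∀ ω : Ω, (∫ t in Set.Ioc (0:ℝ) (τ ω),
      (2 * (P[Set.indicator {ω' : Ω | θ ω' ≤ t} (fun _ => (1:ℝ)) | ℱ t]) ω - 1))
      = ∫ t, H (ω, t) ∂volume := by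
    intro ω
    rw [← integral_indicator measurableSet_Ioc]
    congr 1
  have hGpt : ∀ ω : Ω, ∫ t, G (ω, t) ∂volume = |θ ω - τ ω| - θ ω := by
    intro ω
    have hrw : (fun t => G (ω, t)) = (Set.Ioc (0:ℝ) (τ ω)).indicator
        (fun t => 2 * (Set.Ici (θ ω)).indicator (fun _ => (1:ℝ)) t - 1) := by
      funext t
      rw [hG_def]
      by_cases h : t ∈ Set.Ioc (0:ℝ) (τ ω)
      · rw [Set.indicator_of_mem (show (ω, t) ∈ A from h), Set.indicator_of_mem h]
        simp only [Set.indicator_apply, Set.mem_setOf_eq, Set.mem_Ici]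
      · rw [Set.indicator_of_notMem (show (ω, t) ∉ A from h), Set.indicator_of_notMem h]
    rw [hrw, integral_indicator measurableSet_Ioc]
    exact point_calc (θ ω) (τ ω) (hθ0 ω) (hτ0 ω)
  -- put everything together
  have hmain : (∫ ω, (∫ t in Set.Ioc (0:ℝ) (τ ω),
      (2 * (P[Set.indicator {ω' : Ω | θ ω' ≤ t} (fun _ => (1:ℝ)) | ℱ t]) ω - 1)) ∂P)
      = ∫ ω, (|θ ω - τ ω| - θ ω) ∂P := by
    calc (∫ ω, (∫ t in Set.Ioc (0:ℝ) (τ ω),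
        (2 * (P[Set.indicator {ω' : Ω | θ ω' ≤ t} (fun _ => (1:ℝ)) | ℱ t]) ω - 1)) ∂P)
        = ∫ ω, ∫ t, H (ω, t) ∂volume ∂P := integral_congr_ae (ae_of_all _ hconst)
      _ = ∫ t, ∫ ω, H (ω, t) ∂P ∂volume := swap1
      _ = ∫ t, ∫ ω, G (ω, t) ∂P ∂volume := integral_congr_ae (ae_of_all _ key)
      _ = ∫ ω, ∫ t, G (ω, t) ∂volume ∂P := swap2.symm
      _ = ∫ ω, (|θ ω - τ ω| - θ ω) ∂P := integral_congr_ae (ae_of_all _ hGpt)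
  have habs : Integrable (fun ω => |θ ω - τ ω|) P := by
    have := (hθint.sub hτint).abs
    simpa [Pi.sub_apply] using this
  rw [hmain, integral_sub habs hθint]
  ring
end

section
/- Let X be a Lévy process that is not a compound Poisson process and drifts to −∞, so that X̄_∞ = sup_{t≥0} X_t < ∞ a.s. Then P(X̄_∞ = 0) > 0 if and only if X is irregular upwards, i.e. if and only if inf{t > 0 : X_t > 0} > 0 almost surely. -/
open MeasureTheory ProbabilityTheory Filter Set
open scoped NNReal ENNReal Topology

/-- A (minimal encoding of a) Lévy process indexed by `ℝ≥0`, started at `0`: each coordinate is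
measurable, paths are right-continuous, increments are stationary, and each increment
`X_t − X_s` is independent of the σ-algebra generated by the past `(X_u)_{u ≤ s}`. -/
structure IsLevy {Ω : Type*} [MeasurableSpace Ω] (P : Measure Ω) (X : ℝ≥0 → Ω → ℝ) : Prop where
  measurable : ∀ t, Measurable (X t)
  start : ∀ ω, X 0 ω = 0
  stationary : ∀ s t : ℝ≥0,
    Measure.map (fun ω => X (t + s) ω - X t ω) P = Measure.map (X s) P
  indep : ∀ s t : ℝ≥0, s ≤ t →
    Indep (MeasurableSpace.comap (fun ω => X t ω - X s ω) inferInstance)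
      (⨆ u ∈ Set.Iic s, MeasurableSpace.comap (X u) inferInstance) P
  rightCont : ∀ ω t, ContinuousWithinAt (fun u => X u ω) (Set.Ici t) t

/-- `X` drifts to `−∞` almost surely. -/
def DriftsToNegInfty {Ω : Type*} [MeasurableSpace Ω] (P : Measure Ω)
    (X : ℝ≥0 → Ω → ℝ) : Prop :=
  ∀ᵐ ω ∂P, Tendsto (fun t => X t ω) atTop atBot

/-- `X` is a compound Poisson process.  For a Lévy process this is equivalent to the law of
`X_t` having an atom at `0` for some (equivalently, all) `t > 0`, which is the encoding used
here. -/
def IsCompoundPoisson {Ω : Type*} [MeasurableSpace Ω] (P : Measure Ω)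
    (X : ℝ≥0 → Ω → ℝ) : Prop :=
  ∃ t : ℝ≥0, 0 < t ∧ 0 < P {ω | X t ω = 0}

noncomputable section

namespace Stmt5Aux

variable {Ω : Type*} {mΩ : MeasurableSpace Ω}

def F (X : ℝ≥0 → Ω → ℝ) (t : ℝ≥0) : MeasurableSpace Ω :=
  ⨆ u ∈ Set.Iic t, MeasurableSpace.comap (X u) inferInstance

lemma F_mono (X : ℝ≥0 → Ω → ℝ) {s t : ℝ≥0} (h : s ≤ t) : F X s ≤ F X t := by
  refine iSup_le fun u => iSup_le fun hu => ?_
  exact le_iSup₂ (f := fun u (_ : u ∈ Set.Iic t) => MeasurableSpace.comap (X u) inferInstance)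
    u (le_trans hu h)

lemma F_le (X : ℝ≥0 → Ω → ℝ) (hm : ∀ u, Measurable (X u)) (t : ℝ≥0) : F X t ≤ mΩ := by
  refine iSup_le fun u => iSup_le fun _ => ?_
  exact MeasurableSpace.comap_le_iff_le_map.mpr (hm u)

lemma measurable_X_of_le (X : ℝ≥0 → Ω → ℝ) {u t : ℝ≥0} (h : u ≤ t) :
    Measurable[F X t] (X u) := by
  have : MeasurableSpace.comap (X u) inferInstance ≤ F X t :=
    le_iSup₂ (f := fun u (_ : u ∈ Set.Iic t) => MeasurableSpace.comap (X u) inferInstance) u h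
  exact fun s hs => this _ ⟨s, hs, rfl⟩

/-- The nonnegative rationals inside `ℝ≥0`. -/
def Qset : Set ℝ≥0 := {x : ℝ≥0 | ∃ q : ℚ, (x : ℝ) = q}

lemma Qset_countable : Qset.Countable := by
  have : Qset = ((↑) : ℝ≥0 → ℝ) ⁻¹' (Set.range ((↑) : ℚ → ℝ)) := by
    ext x; simp [Qset, eq_comm]
  rw [this]
  exact (Set.countable_range _).preimage NNReal.coe_injective

lemma zero_mem_Qset : (0 : ℝ≥0) ∈ Qset := ⟨0, by simp⟩

lemma add_mem_Qset {a b : ℝ≥0} (ha : a ∈ Qset) (hb : b ∈ Qset) : a + b ∈ Qset := by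
  obtain ⟨p, hp⟩ := ha; obtain ⟨q, hq⟩ := hb; exact ⟨p + q, by push_cast [hp, hq]; norm_cast⟩

lemma sub_mem_Qset {a b : ℝ≥0} (ha : a ∈ Qset) (hb : b ∈ Qset) : a - b ∈ Qset := by
  obtain ⟨p, hp⟩ := ha; obtain ⟨q, hq⟩ := hb
  rcases le_total b a with h | h
  · exact ⟨p - q, by rw [NNReal.coe_sub h, hp, hq]; push_cast; ring⟩
  · exact ⟨0, by rw [tsub_eq_zero_of_le h]; simp⟩

lemma natCast_mem_Qset (n : ℕ) : (n : ℝ≥0) ∈ Qset := ⟨n, by push_cast; ring⟩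

lemma nsmul_mem_Qset {a : ℝ≥0} (ha : a ∈ Qset) (n : ℕ) : (n : ℝ≥0) * a ∈ Qset := by
  obtain ⟨p, hp⟩ := ha; exact ⟨n * p, by push_cast [hp]; norm_cast⟩

/-- Density: there is a rational in any interval `(x, y) ⊆ ℝ≥0`. -/
lemma exists_qset_btwn {x y : ℝ≥0} (h : x < y) : ∃ q ∈ Qset, x < q ∧ q < y := by
  obtain ⟨r, hr1, hr2⟩ := exists_rat_btwn (show (x : ℝ) < y from h)
  have hr0 : (0 : ℝ) ≤ r := le_of_lt (lt_of_le_of_lt x.2 hr1)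
  refine ⟨(r : ℝ).toNNReal, ⟨r, Real.coe_toNNReal _ hr0⟩, ?_, ?_⟩
  · rw [← NNReal.coe_lt_coe, Real.coe_toNNReal _ hr0]; exact hr1
  · rw [← NNReal.coe_lt_coe, Real.coe_toNNReal _ hr0]; exact hr2


/-! ### Partial-sum times -/

def pt (t : ℝ≥0) {n : ℕ} (δ : Fin n → ℝ≥0) (j : Fin (n + 1)) : ℝ≥0 :=
  t + ∑ i : Fin n, if (i : ℕ) < (j : ℕ) then δ i else 0

lemma pt_zero (t : ℝ≥0) {n : ℕ} (δ : Fin n → ℝ≥0) : pt t δ 0 = t := by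
  simp [pt]

lemma pt_succ (t : ℝ≥0) {n : ℕ} (δ : Fin n → ℝ≥0) (j : Fin n) :
    pt t δ j.succ = pt t δ j.castSucc + δ j := by
  unfold pt
  rw [add_assoc]
  congr 1
  have : ∀ i : Fin n, (if (i : ℕ) < (j.succ : ℕ) then δ i else 0)
      = (if (i : ℕ) < (j.castSucc : ℕ) then δ i else 0) + (if i = j then δ i else 0) := by
    intro i
    rcases lt_trichotomy (i : ℕ) (j : ℕ) with h | h | h
    · simp [Fin.val_succ, Nat.lt_succ_of_lt h, h, Fin.ne_of_val_ne (Nat.ne_of_lt h)]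
    · have : i = j := Fin.ext h
      simp [this, Fin.val_succ, Nat.lt_succ_self]
    · have h1 : ¬ ((i : ℕ) < (j : ℕ) + 1) := by omega
      have h2 : ¬ ((i : ℕ) < (j : ℕ)) := by omega
      simp [Fin.val_succ, h1, h2, Fin.ne_of_val_ne (Nat.ne_of_gt h)]
  rw [Finset.sum_congr rfl (fun i _ => this i), Finset.sum_add_distrib,
    Finset.sum_ite_eq' Finset.univ j (fun i => δ i)]
  simp

lemma pt_le (t : ℝ≥0) {n : ℕ} (δ : Fin n → ℝ≥0) (j : Fin (n + 1)) : t ≤ pt t δ j :=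
  le_self_add

lemma pt_mono (t : ℝ≥0) {n : ℕ} (δ : Fin n → ℝ≥0) {j k : Fin (n + 1)} (h : j ≤ k) :
    pt t δ j ≤ pt t δ k := by
  unfold pt
  refine add_le_add_right (Finset.sum_le_sum fun i _ => ?_) t
  by_cases hi : (i : ℕ) < (j : ℕ)
  · simp [hi, lt_of_lt_of_le hi h]
  · simp only [hi, if_false]; positivity

lemma pt_cast (t : ℝ≥0) {n : ℕ} (δ : Fin (n + 1) → ℝ≥0) (j : Fin (n + 1)) :
    pt t (δ ∘ Fin.castSucc) j = pt t δ j.castSucc := by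
  unfold pt
  congr 1
  rw [Fin.sum_univ_castSucc (f := fun i : Fin (n+1) => if (i : ℕ) < (j.castSucc : ℕ) then δ i else 0)]
  have : ¬ ((Fin.last n : ℕ) < (j.castSucc : ℕ)) := by
    simp [Fin.le_def]
    exact j.is_le
  simp only [this, if_false, add_zero]
  rfl

lemma iInter_fin_succ {α : Type*} {n : ℕ} (S : Fin (n + 1) → Set α) :
    ⋂ j, S j = (⋂ j : Fin n, S j.castSucc) ∩ S (Fin.last n) := by
  ext x
  simp only [Set.mem_iInter, Set.mem_inter_iff]
  constructor
  · exact fun h => ⟨fun j => h _, h _⟩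
  · rintro ⟨h1, h2⟩ j
    rcases Fin.lastCases (motive := fun j => x ∈ S j) h2 h1 j with h
    exact h

variable (P : Measure Ω) [IsProbabilityMeasure P] (X : ℝ≥0 → Ω → ℝ)

/-- Core independence/stationarity lemma for boxes of consecutive increments. -/
lemma K1 (hX : IsLevy P X) : ∀ (n : ℕ) (t : ℝ≥0) (δ : Fin n → ℝ≥0) (C : Set Ω),
    MeasurableSet[F X t] C → ∀ (B : Fin n → Set ℝ), (∀ j, MeasurableSet (B j)) →
    P (C ∩ ⋂ j, {ω | X (pt t δ j.succ) ω - X (pt t δ j.castSucc) ω ∈ B j})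
      = P C * ∏ j, P {ω | X (δ j) ω ∈ B j} := by
  intro n
  induction n with
  | zero =>
    intro t δ C hC B hB
    simp [Set.iInter_of_empty]
  | succ n ih =>
    intro t δ C hC B hB
    set L : Fin (n + 1) := Fin.last n with hL
    set a : ℝ≥0 := pt t δ L.castSucc with ha
    set b : ℝ≥0 := pt t δ L.succ with hb
    have hab : a ≤ b := pt_mono t δ (by simp [Fin.le_def])
    set S : Fin (n + 1) → Set Ω :=
      fun j => {ω | X (pt t δ j.succ) ω - X (pt t δ j.castSucc) ω ∈ B j} with hS
    have hsplit : ⋂ j, S j = (⋂ j : Fin n, S j.castSucc) ∩ S L := iInter_fin_succ S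
    set D : Set Ω := C ∩ ⋂ j : Fin n, S j.castSucc with hD
    have hDmeas : MeasurableSet[F X a] D := by
      refine MeasurableSet.inter ?_ (MeasurableSet.iInter fun j => ?_)
      · exact F_mono X (pt_le t δ _) _ hC
      · have h1 : pt t δ (j.castSucc).succ ≤ a := by
          refine pt_mono t δ ?_
          simp [Fin.le_def, hL]
        have h2 : pt t δ (j.castSucc).castSucc ≤ a := by
          refine pt_mono t δ ?_
          simp [Fin.le_def, hL]
        have := ((measurable_X_of_le X h1).sub (measurable_X_of_le X h2)) (hB j.castSucc)
        exact this
    have hbab : b = a + δ L := pt_succ t δ L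
    have hindep := hX.indep a b hab
    have hfact : P (S L ∩ D) = P (S L) * P D := by
      refine (Indep_iff _ _ _).1 hindep (S L) D ⟨B L, hB L, rfl⟩ hDmeas
    have hSL : P (S L) = P {ω | X (δ L) ω ∈ B L} := by
      have hst := hX.stationary (δ L) a
      have hmeas1 : Measurable (fun ω => X (a + δ L) ω - X a ω) :=
        (hX.measurable _).sub (hX.measurable _)
      have e1 : S L = (fun ω => X (a + δ L) ω - X a ω) ⁻¹' (B L) := by
        rw [hS]; rw [← hbab]; rfl
      rw [e1, ← Measure.map_apply hmeas1 (hB L), hst,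
        Measure.map_apply (hX.measurable _) (hB L)]
      rfl
    have hDval : P D = P C * ∏ j : Fin n, P {ω | X ((δ ∘ Fin.castSucc) j) ω ∈ B j.castSucc} := by
      have e2 : (⋂ j : Fin n, S j.castSucc)
          = ⋂ j : Fin n, {ω | X (pt t (δ ∘ Fin.castSucc) j.succ) ω
              - X (pt t (δ ∘ Fin.castSucc) j.castSucc) ω ∈ B j.castSucc} := by
        refine Set.iInter_congr fun j => ?_
        rw [pt_cast, pt_cast, ← Fin.succ_castSucc]
      rw [hD, e2]
      exact ih t (δ ∘ Fin.castSucc) C hC (fun j => B j.castSucc) (fun j => hB _)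
    calc P (C ∩ ⋂ j, S j) = P (S L ∩ D) := by
          rw [hsplit, hD, ← Set.inter_assoc, Set.inter_comm]
    _ = P (S L) * P D := hfact
    _ = P C * ∏ j : Fin (n+1), P {ω | X (δ j) ω ∈ B j} := by
          rw [hSL, hDval, Fin.prod_univ_castSucc (f := fun j : Fin (n+1) => P {ω | X (δ j) ω ∈ B j})]
          simp only [Function.comp]
          ring


/-! ### Vector of consecutive increments -/

def incVec (X : ℝ≥0 → Ω → ℝ) (t : ℝ≥0) {n : ℕ} (δ : Fin n → ℝ≥0) : Ω → (Fin n → ℝ) :=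
  fun ω j => X (pt t δ j.succ) ω - X (pt t δ j.castSucc) ω

lemma measurable_incVec (hm : ∀ u, Measurable (X u)) (t : ℝ≥0) {n : ℕ} (δ : Fin n → ℝ≥0) :
    Measurable (incVec X t δ) :=
  measurable_pi_lambda _ fun j => (hm _).sub (hm _)

lemma K1a (hX : IsLevy P X) (t : ℝ≥0) {n : ℕ} (δ : Fin n → ℝ≥0) (C : Set Ω)
    (hC : MeasurableSet[F X t] C) :
    Measure.map (incVec X t δ) (P.restrict C)
      = (P C) • Measure.map (incVec X 0 δ) P := by
  have hCm : MeasurableSet C := F_le X hX.measurable t C hC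
  have hminc : ∀ t', Measurable (incVec X t' δ) := fun t' => measurable_incVec X hX.measurable t' δ
  haveI : IsFiniteMeasure (Measure.map (incVec X t δ) (P.restrict C)) := by
    constructor
    rw [Measure.map_apply (hminc t) MeasurableSet.univ]
    exact measure_lt_top (P.restrict C) _
  refine ext_of_generate_finite _ generateFrom_pi.symm isPiSystem_pi ?_ ?_
  · rintro _ ⟨B, hB, rfl⟩
    have hBm : ∀ j, MeasurableSet (B j) := fun j => hB j (Set.mem_univ j)
    have hpre : ∀ t', (incVec X t' δ) ⁻¹' (Set.pi Set.univ B)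
        = ⋂ j, {ω | X (pt t' δ j.succ) ω - X (pt t' δ j.castSucc) ω ∈ B j} := by
      intro t'; ext ω; simp [incVec, Set.mem_pi]
    rw [Measure.map_apply (hminc t) (MeasurableSet.pi Set.countable_univ
      (fun j _ => hBm j)), Measure.restrict_apply ((hminc t) (MeasurableSet.pi
      Set.countable_univ (fun j _ => hBm j))), Set.inter_comm, hpre,
      K1 P X hX n t δ C hC B hBm]
    rw [Measure.smul_apply, Measure.map_apply (hminc 0) (MeasurableSet.pi Set.countable_univ
      (fun j _ => hBm j)), hpre]
    have h0 : P (⋂ j, {ω | X (pt 0 δ j.succ) ω - X (pt 0 δ j.castSucc) ω ∈ B j})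
        = P Set.univ * ∏ j, P {ω | X (δ j) ω ∈ B j} := by
      rw [← Set.univ_inter (⋂ j, {ω | X (pt 0 δ j.succ) ω - X (pt 0 δ j.castSucc) ω ∈ B j})]
      exact K1 P X hX n 0 δ Set.univ MeasurableSet.univ B hBm
    rw [h0, measure_univ, one_mul, smul_eq_mul]
  · rw [Measure.map_apply (hminc t) MeasurableSet.univ,
      Measure.smul_apply, Measure.map_apply (hminc 0) MeasurableSet.univ]
    simp only [Set.preimage_univ, Measure.restrict_apply MeasurableSet.univ, Set.univ_inter,
      measure_univ, smul_eq_mul, mul_one]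

/-! ### Telescoping -/

lemma tel {n : ℕ} (f : Fin (n + 1) → ℝ) :
    ∀ (k : ℕ) (hk : k < n), ∑ i : Fin n, (if (i : ℕ) ≤ k then f i.succ - f i.castSucc else 0)
      = f (⟨k, hk⟩ : Fin n).succ - f 0 := by
  intro k
  induction k with
  | zero =>
    intro hk
    have h : ∀ i : Fin n, (if (i : ℕ) ≤ 0 then f i.succ - f i.castSucc else 0)
        = if i = ⟨0, hk⟩ then f i.succ - f i.castSucc else 0 := by
      intro i
      by_cases h0 : (i : ℕ) ≤ 0
      · have : i = ⟨0, hk⟩ := Fin.ext (Nat.le_zero.mp h0)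
        simp [this]
      · have : ¬ (i = ⟨0, hk⟩) := by
          intro he; exact h0 (le_of_eq (by rw [he]))
        simp [h0, this]
    rw [Finset.sum_congr rfl (fun i _ => h i),
      Finset.sum_ite_eq' Finset.univ (⟨0, hk⟩ : Fin n) (fun i => f i.succ - f i.castSucc)]
    have : (⟨0, hk⟩ : Fin n).castSucc = 0 := by
      apply Fin.ext; simp
    simp [this]
  | succ k ihk =>
    intro hk
    have hk' : k < n := Nat.lt_of_succ_lt hk
    have h : ∀ i : Fin n, (if (i : ℕ) ≤ k + 1 then f i.succ - f i.castSucc else 0)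
        = (if (i : ℕ) ≤ k then f i.succ - f i.castSucc else 0)
          + (if i = ⟨k + 1, hk⟩ then f i.succ - f i.castSucc else 0) := by
      intro i
      rcases Nat.lt_trichotomy (i : ℕ) (k + 1) with h1 | h1 | h1
      · have h2 : (i : ℕ) ≤ k := Nat.lt_succ_iff.mp h1
        have h3 : ¬ (i = ⟨k + 1, hk⟩) := by
          intro he; rw [he] at h1; exact absurd h1 (by simp)
        simp [Nat.le_of_lt_succ, h2, le_trans h2 (Nat.le_succ k), h3]
      · have h2 : i = ⟨k + 1, hk⟩ := Fin.ext h1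
        have h3 : ¬ ((i : ℕ) ≤ k) := by omega
        simp [h2, h3, h1]
      · have h2 : ¬ ((i : ℕ) ≤ k + 1) := by omega
        have h3 : ¬ ((i : ℕ) ≤ k) := by omega
        have h4 : ¬ (i = ⟨k + 1, hk⟩) := by
          intro he; rw [he] at h1; simp at h1
        simp [h2, h3, h4]
    rw [Finset.sum_congr rfl (fun i _ => h i), Finset.sum_add_distrib, ihk hk',
      Finset.sum_ite_eq' Finset.univ (⟨k + 1, hk⟩ : Fin n) (fun i => f i.succ - f i.castSucc)]
    have hcast : (⟨k + 1, hk⟩ : Fin n).castSucc = (⟨k, hk'⟩ : Fin n).succ := by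
      apply Fin.ext; simp
    simp only [Finset.mem_univ, if_true, hcast]
    ring

/-! ### The workhorse: factorization over monotone finite time vectors -/

def vecX (X : ℝ≥0 → Ω → ℝ) {m : ℕ} (s : Fin m → ℝ≥0) : Ω → (Fin m → ℝ) :=
  fun ω j => X (s j) ω

lemma measurable_vecX (hm : ∀ u, Measurable (X u)) {m : ℕ} (s : Fin m → ℝ≥0) :
    Measurable (vecX X s) :=
  measurable_pi_lambda _ fun j => hm _

lemma K2m (hX : IsLevy P X) {m : ℕ} (s : Fin m → ℝ≥0) (hs : Monotone s) (t : ℝ≥0)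
    (C : Set Ω) (hC : MeasurableSet[F X t] C) (B : Set (Fin m → ℝ)) (hB : MeasurableSet B) :
    P (C ∩ (fun ω (j : Fin m) => X (t + s j) ω - X t ω) ⁻¹' B)
      = P C * P (vecX X s ⁻¹' B) := by
  classical
  -- the gaps
  set δ : Fin m → ℝ≥0 := fun j =>
    s j - (if h : 0 < (j : ℕ) then s ⟨(j : ℕ) - 1, by omega⟩ else 0) with hδ
  have ptEq : ∀ (k : ℕ) (hk : k < m), ∀ t' : ℝ≥0,
      pt t' δ (⟨k, hk⟩ : Fin m).succ = t' + s ⟨k, hk⟩ := by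
    intro k
    induction k with
    | zero =>
      intro hk t'
      rw [pt_succ]
      have h0 : (⟨0, hk⟩ : Fin m).castSucc = 0 := by apply Fin.ext; simp
      rw [h0, pt_zero]
      have : δ ⟨0, hk⟩ = s ⟨0, hk⟩ := by simp [hδ]
      rw [this]
    | succ k ihk =>
      intro hk t'
      have hk' : k < m := Nat.lt_of_succ_lt hk
      rw [pt_succ]
      have hcast : (⟨k + 1, hk⟩ : Fin m).castSucc = (⟨k, hk'⟩ : Fin m).succ := by
        apply Fin.ext; simp
      rw [hcast, ihk hk' t']
      have hδval : δ ⟨k + 1, hk⟩ = s ⟨k + 1, hk⟩ - s ⟨k, hk'⟩ := by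
        simp only [hδ]
        have : (0 : ℕ) < k + 1 := Nat.succ_pos k
        rw [dif_pos this]
        congr 1
      rw [hδval, add_assoc, add_tsub_cancel_of_le (hs (by simp [Fin.le_def]))]
  -- partial-sum map
  set Φ : (Fin m → ℝ) → (Fin m → ℝ) :=
    fun y j => ∑ i : Fin m, (if (i : ℕ) ≤ (j : ℕ) then y i else 0) with hΦ
  have hΦmeas : Measurable Φ := by
    refine measurable_pi_lambda _ fun j => Finset.measurable_sum _ fun i _ => ?_
    by_cases h : (i : ℕ) ≤ (j : ℕ)
    · simpa [h] using measurable_pi_apply i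
    · simp [h]
  have hcomp : ∀ t' : ℝ≥0, ∀ ω, Φ (incVec X t' δ ω) = fun j => X (t' + s j) ω - X t' ω := by
    intro t' ω
    funext j
    have := tel (fun i : Fin (m + 1) => X (pt t' δ i) ω) (j : ℕ) j.isLt
    simp only [hΦ, incVec]
    rw [this, ptEq (j : ℕ) j.isLt t', pt_zero]
  have hpre : ∀ t' : ℝ≥0,
      (fun ω (j : Fin m) => X (t' + s j) ω - X t' ω) ⁻¹' B = incVec X t' δ ⁻¹' (Φ ⁻¹' B) := by
    intro t'; ext ω
    simp only [Set.mem_preimage, hcomp t' ω]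
  have hminc : ∀ t', Measurable (incVec X t' δ) :=
    fun t' => measurable_incVec X hX.measurable t' δ
  have hΦB : MeasurableSet (Φ ⁻¹' B) := hΦmeas hB
  rw [hpre t, Set.inter_comm, ← Measure.restrict_apply ((hminc t) hΦB),
    ← Measure.map_apply (hminc t) hΦB, K1a P X hX t δ C hC, Measure.smul_apply,
    Measure.map_apply (hminc 0) hΦB, smul_eq_mul]
  congr 1
  have : incVec X 0 δ ⁻¹' (Φ ⁻¹' B) = vecX X s ⁻¹' B := by
    ext ω
    simp only [Set.mem_preimage, hcomp 0 ω, vecX]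
    have : (fun j => X (0 + s j) ω - X 0 ω) = fun j => X (s j) ω := by
      funext j; rw [zero_add, hX.start ω, sub_zero]
    rw [this]
    exact Iff.rfl
  rw [this]


/-! ### Countable-time factorization -/

lemma measurable_findim_event (hm : ∀ u, Measurable (X u)) (t : ℝ≥0) (S : Set ℝ≥0)
    (hS : S.Countable) (β : ℝ≥0 → ℝ) :
    MeasurableSet {ω | ∀ q ∈ S, X (t + q) ω - X t ω ≤ β q} := by
  have : {ω | ∀ q ∈ S, X (t + q) ω - X t ω ≤ β q}
      = ⋂ q ∈ S, {ω | X (t + q) ω - X t ω ≤ β q} := by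
    ext ω; simp
  rw [this]
  exact MeasurableSet.biInter hS fun q _ =>
    measurableSet_le ((hm _).sub (hm _)) measurable_const

lemma measurable_base_event (hm : ∀ u, Measurable (X u)) (S : Set ℝ≥0)
    (hS : S.Countable) (β : ℝ≥0 → ℝ) :
    MeasurableSet {ω | ∀ q ∈ S, X q ω ≤ β q} := by
  have : {ω | ∀ q ∈ S, X q ω ≤ β q} = ⋂ q ∈ S, {ω | X q ω ≤ β q} := by
    ext ω; simp
  rw [this]
  exact MeasurableSet.biInter hS fun q _ => measurableSet_le (hm _) measurable_const

lemma K3 (hX : IsLevy P X) (t : ℝ≥0) (Sset : Set ℝ≥0) (hScount : Sset.Countable)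
    (β : ℝ≥0 → ℝ) (C : Set Ω) (hC : MeasurableSet[F X t] C) :
    P (C ∩ {ω | ∀ q ∈ Sset, X (t + q) ω - X t ω ≤ β q})
      = P C * P {ω | ∀ q ∈ Sset, X q ω ≤ β q} := by
  rcases Sset.eq_empty_or_nonempty with rfl | hne
  · simp only [Set.mem_empty_iff_false, false_implies, implies_true, Set.setOf_true,
      Set.inter_univ, measure_univ, mul_one]
  obtain ⟨e, hSe⟩ := Set.Countable.exists_eq_range hScount hne
  subst hSe
  have hCm : MeasurableSet C := F_le X hX.measurable t C hC
  -- finite stage events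
  set Em : ℕ → Set Ω :=
    fun m => {ω | ∀ i ≤ m, X (t + e i) ω - X t ω ≤ β (e i)} with hEm
  set E0m : ℕ → Set Ω := fun m => {ω | ∀ i ≤ m, X (e i) ω ≤ β (e i)} with hE0m
  have hEmmeas : ∀ m, MeasurableSet (Em m) := by
    intro m
    have : Em m = ⋂ i ∈ {i : ℕ | i ≤ m}, {ω | X (t + e i) ω - X t ω ≤ β (e i)} := by
      ext ω; simp [hEm]
    rw [this]
    exact MeasurableSet.biInter (Set.to_countable _) fun i _ =>
      measurableSet_le ((hX.measurable _).sub (hX.measurable _)) measurable_const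
  have hE0mmeas : ∀ m, MeasurableSet (E0m m) := by
    intro m
    have : E0m m = ⋂ i ∈ {i : ℕ | i ≤ m}, {ω | X (e i) ω ≤ β (e i)} := by
      ext ω; simp [hE0m]
    rw [this]
    exact MeasurableSet.biInter (Set.to_countable _) fun i _ =>
      measurableSet_le (hX.measurable _) measurable_const
  -- each finite stage factorizes
  have key : ∀ m, P (C ∩ Em m) = P C * P (E0m m) := by
    intro m
    classical
    set Fm : Finset ℝ≥0 := Finset.image e (Finset.range (m + 1)) with hFm
    set k : ℕ := Fm.card with hk
    set oi := Fm.orderIsoOfFin rfl with hoi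
    set svec : Fin k → ℝ≥0 := fun j => (oi j : ℝ≥0) with hsvec
    have hsmono : Monotone svec := fun j1 j2 h => by
      have := oi.monotone h
      exact this
    set B : Set (Fin k → ℝ) := {y | ∀ j, y j ≤ β (svec j)} with hB
    have hBmeas : MeasurableSet B := by
      have : B = ⋂ j, (fun y : Fin k → ℝ => y j) ⁻¹' (Set.Iic (β (svec j))) := by
        ext y; simp [hB]
      rw [this]
      exact MeasurableSet.iInter fun j => (measurable_pi_apply j) measurableSet_Iic
    have hmem : ∀ x : ℝ≥0, x ∈ Fm ↔ ∃ i ≤ m, e i = x := by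
      intro x; simp [hFm, Nat.lt_succ_iff]
    have hEq : Em m = (fun ω (j : Fin k) => X (t + svec j) ω - X t ω) ⁻¹' B := by
      ext ω
      simp only [hEm, Set.mem_setOf_eq, Set.mem_preimage, hB]
      constructor
      · intro h j
        have : (svec j : ℝ≥0) ∈ Fm := (oi j).2
        obtain ⟨i, him, hei⟩ := (hmem _).1 this
        rw [← hei]; exact h i him
      · intro h i him
        have hmemi : e i ∈ Fm := (hmem _).2 ⟨i, him, rfl⟩
        obtain ⟨j, hj⟩ := oi.surjective ⟨e i, hmemi⟩
        have : svec j = e i := by simp only [hsvec]; rw [hj]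
        rw [← this]; exact h j
    have hEq0 : E0m m = vecX X svec ⁻¹' B := by
      ext ω
      simp only [hE0m, Set.mem_setOf_eq, Set.mem_preimage, hB, vecX]
      constructor
      · intro h j
        have : (svec j : ℝ≥0) ∈ Fm := (oi j).2
        obtain ⟨i, him, hei⟩ := (hmem _).1 this
        rw [← hei]; exact h i him
      · intro h i him
        have hmemi : e i ∈ Fm := (hmem _).2 ⟨i, him, rfl⟩
        obtain ⟨j, hj⟩ := oi.surjective ⟨e i, hmemi⟩
        have : svec j = e i := by simp only [hsvec]; rw [hj]
        rw [← this]; exact h j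
    rw [hEq, hEq0]
    exact K2m P X hX svec hsmono t C hC B hBmeas
  -- pass to the limit
  have hfull : (⋂ m, C ∩ Em m) = C ∩ {ω | ∀ q ∈ Set.range e, X (t + q) ω - X t ω ≤ β q} := by
    ext ω
    simp only [Set.mem_iInter, Set.mem_inter_iff, hEm, Set.mem_setOf_eq]
    constructor
    · intro h
      refine ⟨(h 0).1, ?_⟩
      rintro q ⟨i, rfl⟩
      exact (h i).2 i le_rfl
    · rintro ⟨hc, h⟩ m
      exact ⟨hc, fun i _ => h (e i) ⟨i, rfl⟩⟩
  have hfull0 : (⋂ m, E0m m) = {ω | ∀ q ∈ Set.range e, X q ω ≤ β q} := by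
    ext ω
    simp only [Set.mem_iInter, hE0m, Set.mem_setOf_eq]
    constructor
    · intro h
      rintro q ⟨i, rfl⟩
      exact h i i le_rfl
    · intro h m i _
      exact h (e i) ⟨i, rfl⟩
  have hl1 : Tendsto (fun m => P (C ∩ Em m)) atTop
      (𝓝 (P (C ∩ {ω | ∀ q ∈ Set.range e, X (t + q) ω - X t ω ≤ β q}))) := by
    rw [← hfull]
    exact tendsto_measure_iInter_atTop
      (fun m => (hCm.inter (hEmmeas m)).nullMeasurableSet)
      (fun m1 m2 h => Set.inter_subset_inter_right _ (fun ω hω i hi => hω i (le_trans hi h)))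
      ⟨0, measure_ne_top P _⟩
  have hl2 : Tendsto (fun m => P C * P (E0m m)) atTop
      (𝓝 (P C * P {ω | ∀ q ∈ Set.range e, X q ω ≤ β q})) := by
    rw [← hfull0]
    exact ENNReal.Tendsto.const_mul
      (tendsto_measure_iInter_atTop (fun m => (hE0mmeas m).nullMeasurableSet)
        (fun m1 m2 h ω hω i hi => hω i (le_trans hi h)) ⟨0, measure_ne_top P _⟩)
      (Or.inr (measure_ne_top P _))
  have := tendsto_nhds_unique ((Filter.tendsto_congr (fun m => key m)).1 hl1) hl2
  exact this

lemma K3' (hX : IsLevy P X) (t : ℝ≥0) (Sset : Set ℝ≥0) (hScount : Sset.Countable)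
    (C : Set Ω) (hC : MeasurableSet[F X t] C) :
    P (C ∩ {ω | ∃ K : ℕ, ∀ q ∈ Sset, X (t + q) ω - X t ω ≤ (K : ℝ)})
      = P C * P {ω | ∃ K : ℕ, ∀ q ∈ Sset, X q ω ≤ (K : ℝ)} := by
  have hUn : (C ∩ {ω | ∃ K : ℕ, ∀ q ∈ Sset, X (t + q) ω - X t ω ≤ (K : ℝ)})
      = ⋃ K : ℕ, (C ∩ {ω | ∀ q ∈ Sset, X (t + q) ω - X t ω ≤ (K : ℝ)}) := by
    ext ω
    simp only [Set.mem_inter_iff, Set.mem_setOf_eq, Set.mem_iUnion]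
    tauto
  have hUn0 : {ω | ∃ K : ℕ, ∀ q ∈ Sset, X q ω ≤ (K : ℝ)}
      = ⋃ K : ℕ, {ω | ∀ q ∈ Sset, X q ω ≤ (K : ℝ)} := by
    ext ω; simp only [Set.mem_setOf_eq, Set.mem_iUnion]
  have hmono1 : Monotone (fun K : ℕ => C ∩ {ω | ∀ q ∈ Sset, X (t + q) ω - X t ω ≤ (K : ℝ)}) := by
    intro K1 K2 h
    refine Set.inter_subset_inter_right _ (fun ω hω q hq => le_trans (hω q hq) ?_)
    exact_mod_cast h
  have hmono2 : Monotone (fun K : ℕ => {ω | ∀ q ∈ Sset, X q ω ≤ (K : ℝ)}) := by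
    intro K1 K2 h ω hω q hq
    exact le_trans (hω q hq) (by exact_mod_cast h)
  have hl1 := tendsto_measure_iUnion_atTop (μ := P) hmono1
  have hl2 := ENNReal.Tendsto.const_mul (a := P C) (tendsto_measure_iUnion_atTop (μ := P) hmono2)
    (Or.inr (measure_ne_top P C))
  have hK : ∀ K : ℕ, P (C ∩ {ω | ∀ q ∈ Sset, X (t + q) ω - X t ω ≤ (K : ℝ)})
      = P C * P {ω | ∀ q ∈ Sset, X q ω ≤ (K : ℝ)} :=
    fun K => K3 P X hX t Sset hScount (fun _ => (K : ℝ)) C hC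
  rw [hUn, hUn0]
  exact tendsto_nhds_unique ((Filter.tendsto_congr hK).1 hl1) hl2


/-! ### Auxiliary limit lemmas -/

/-- If indicators of `S k` eventually agree with that of `S` a.e., measures converge. -/
lemma tendsto_measure_of_ae_eventually (S : ℕ → Set Ω) (T : Set Ω)
    (hS : ∀ k, MeasurableSet (S k)) (hT : MeasurableSet T)
    (h : ∀ᵐ ω ∂P, ∀ᶠ k in atTop, (ω ∈ S k ↔ ω ∈ T)) :
    Tendsto (fun k => P (S k)) atTop (𝓝 (P T)) := by
  have hrw : ∀ k, P (S k) = ∫⁻ ω, (S k).indicator (1 : Ω → ℝ≥0∞) ω ∂P := by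
    intro k; rw [lintegral_indicator_one (hS k)]
  have hrwT : P T = ∫⁻ ω, T.indicator (1 : Ω → ℝ≥0∞) ω ∂P := by
    rw [lintegral_indicator_one hT]
  simp only [hrw, hrwT]
  refine tendsto_lintegral_of_dominated_convergence (fun _ => (1 : ℝ≥0∞))
    (fun k => (measurable_const.indicator (hS k))) ?_ ?_ ?_
  · intro k
    filter_upwards with ω
    by_cases hω : ω ∈ S k <;> simp [hω]
  · simp
  · filter_upwards [h] with ω hω
    refine Filter.Tendsto.congr' ?_ tendsto_const_nhds
    filter_upwards [hω] with k hk
    by_cases hT' : ω ∈ T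
    · simp [hT', hk.2 hT']
    · have : ω ∉ S k := fun hh => hT' (hk.1 hh)
      simp [hT', this]

/-- Right-continuity: a bound on rationals slightly to the right gives a bound at `t`. -/
lemma le_of_rat_right (X : ℝ≥0 → Ω → ℝ)
    (hrc : ∀ ω t, ContinuousWithinAt (fun u => X u ω) (Set.Ici t) t)
    (ω : Ω) (t : ℝ≥0) (c : ℝ) (η : ℝ≥0) (hη : 0 < η)
    (h : ∀ q ∈ Qset, t < q → q < t + η → X q ω ≤ c) : X t ω ≤ c := by
  have hchoice : ∀ m : ℕ, ∃ q : ℝ≥0, q ∈ Qset ∧ t < q ∧ q < t + min η ((m : ℝ≥0) + 1)⁻¹ := by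
    intro m
    have hpos : (0 : ℝ≥0) < min η ((m : ℝ≥0) + 1)⁻¹ := by
      apply lt_min hη
      positivity
    obtain ⟨q, hq, h1, h2⟩ := exists_qset_btwn (lt_add_of_pos_right t hpos)
    exact ⟨q, hq, h1, h2⟩
  choose q hqQ hqgt hqlt using hchoice
  have hqbound : ∀ m, X (q m) ω ≤ c := by
    intro m
    refine h (q m) (hqQ m) (hqgt m) (lt_of_lt_of_le (hqlt m) ?_)
    exact add_le_add_right (min_le_left _ _) t
  have htend : Tendsto q atTop (𝓝 t) := by
    rw [← NNReal.tendsto_coe]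
    have hub : Tendsto (fun m : ℕ => (t : ℝ) + ((m : ℝ) + 1)⁻¹) atTop (𝓝 ((t : ℝ) + 0)) := by
      exact tendsto_const_nhds.add (tendsto_one_div_add_atTop_nhds_zero_nat.congr
        (fun m => by rw [one_div]))
    rw [add_zero] at hub
    refine tendsto_of_tendsto_of_tendsto_of_le_of_le tendsto_const_nhds hub ?_ ?_
    · intro m; exact le_of_lt (hqgt m)
    · intro m
      refine le_trans (le_of_lt (hqlt m)) ?_
      push_cast
      have : ((min η ((m : ℝ≥0) + 1)⁻¹ : ℝ≥0) : ℝ) ≤ (((m : ℝ≥0) + 1)⁻¹ : ℝ≥0) := by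
        exact_mod_cast min_le_right _ _
      refine add_le_add_right (le_trans this ?_) _
      push_cast
      exact le_refl _
  have htendW : Tendsto q atTop (𝓝[Set.Ici t] t) := by
    refine tendsto_nhdsWithin_of_tendsto_nhds_of_eventually_within _ htend ?_
    filter_upwards with m
    exact le_of_lt (hqgt m)
  have := ((hrc ω t).tendsto).comp htendW
  exact le_of_tendsto this (Filter.Eventually.of_forall hqbound)

/-! ### The irregularity events -/

def An (X : ℝ≥0 → Ω → ℝ) (n : ℕ) : Set Ω :=
  {ω | ∀ q ∈ Qset ∩ Set.Ioc 0 (((n : ℝ≥0) + 1)⁻¹), X q ω ≤ 0}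

def Aset (X : ℝ≥0 → Ω → ℝ) : Set Ω := ⋃ n, An X n

lemma An_mono (X : ℝ≥0 → Ω → ℝ) : Monotone (An X) := by
  intro n1 n2 h ω hω q hq
  refine hω q ⟨hq.1, hq.2.1, le_trans hq.2.2 ?_⟩
  rw [inv_le_inv₀]
  · exact_mod_cast Nat.succ_le_succ h
  · positivity
  · positivity

lemma measurable_An (hm : ∀ u, Measurable (X u)) (n : ℕ) : MeasurableSet (An X n) :=
  measurable_base_event X hm _ (Qset_countable.mono (Set.inter_subset_left)) 0

lemma measurable_Aset (hm : ∀ u, Measurable (X u)) : MeasurableSet (Aset X) :=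
  MeasurableSet.iUnion fun n => measurable_An X hm n

lemma An_mem_F (X : ℝ≥0 → Ω → ℝ) {n : ℕ} {s : ℝ≥0} (h : ((n : ℝ≥0) + 1)⁻¹ ≤ s) :
    MeasurableSet[F X s] (An X n) := by
  have : An X n = ⋂ q ∈ Qset ∩ Set.Ioc 0 (((n : ℝ≥0) + 1)⁻¹), {ω | X q ω ≤ 0} := by
    ext ω; simp [An]
  rw [this]
  refine MeasurableSet.biInter (Qset_countable.mono Set.inter_subset_left) fun q hq => ?_
  exact measurableSet_le (measurable_X_of_le X (le_trans hq.2.2 h)) (@measurable_const _ _ _ (F X s) _)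

lemma Aset_mem_F (X : ℝ≥0 → Ω → ℝ) {s : ℝ≥0} (hs : 0 < s) :
    MeasurableSet[F X s] (Aset X) := by
  obtain ⟨n₀, hn₀⟩ := exists_nat_gt (s⁻¹ : ℝ≥0)
  have hle : ((n₀ : ℝ≥0) + 1)⁻¹ ≤ s := by
    rw [inv_le_comm₀ (by positivity) hs]
    exact le_of_lt (lt_trans hn₀ (lt_add_one _))
  have : Aset X = ⋃ m, An X (n₀ + m) := by
    apply Set.Subset.antisymm
    · rintro ω hω
      obtain ⟨n, hn⟩ := Set.mem_iUnion.1 hω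
      exact Set.mem_iUnion.2 ⟨n, An_mono X (Nat.le_add_left n n₀) hn⟩
    · rintro ω hω
      obtain ⟨m, hm⟩ := Set.mem_iUnion.1 hω
      exact Set.mem_iUnion.2 ⟨n₀ + m, hm⟩
  rw [this]
  refine MeasurableSet.iUnion fun m => An_mem_F X (le_trans ?_ hle)
  rw [inv_le_inv₀ (by positivity) (by positivity)]
  exact_mod_cast by omega


/-! ### Almost-sure global upper bounds -/

def S01 : Set ℝ≥0 := Qset ∩ Set.Iic 1

lemma S01_countable : S01.Countable := Qset_countable.mono Set.inter_subset_left

def IncBdd (X : ℝ≥0 → Ω → ℝ) (j : ℕ) : Set Ω :=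
  {ω | ∃ K : ℕ, ∀ q ∈ S01, X ((j : ℝ≥0) + q) ω - X (j : ℝ≥0) ω ≤ (K : ℝ)}

def BaseBdd (X : ℝ≥0 → Ω → ℝ) : Set Ω :=
  {ω | ∃ K : ℕ, ∀ q ∈ S01, X q ω ≤ (K : ℝ)}

lemma measurable_IncBdd (hm : ∀ u, Measurable (X u)) (j : ℕ) : MeasurableSet (IncBdd X j) := by
  have : IncBdd X j = ⋃ K : ℕ, {ω | ∀ q ∈ S01, X ((j : ℝ≥0) + q) ω - X (j : ℝ≥0) ω ≤ (K : ℝ)} := by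
    ext ω; simp [IncBdd]
  rw [this]
  exact MeasurableSet.iUnion fun K => measurable_findim_event X hm _ _ S01_countable _

lemma measurable_BaseBdd (hm : ∀ u, Measurable (X u)) : MeasurableSet (BaseBdd X) := by
  have : BaseBdd X = ⋃ K : ℕ, {ω | ∀ q ∈ S01, X q ω ≤ ((K : ℕ) : ℝ)} := by
    ext ω; simp [BaseBdd]
  rw [this]
  exact MeasurableSet.iUnion fun K => measurable_base_event X hm _ S01_countable _

lemma IncBdd_mem_F (X : ℝ≥0 → Ω → ℝ) {j a : ℕ} (h : j + 1 ≤ a) :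
    MeasurableSet[F X (a : ℝ≥0)] (IncBdd X j) := by
  have hj : ((j : ℝ≥0)) ≤ (a : ℝ≥0) := by
    exact_mod_cast le_trans (Nat.le_succ j) h
  have : IncBdd X j
      = ⋃ K : ℕ, ⋂ q ∈ S01, {ω | X ((j : ℝ≥0) + q) ω - X (j : ℝ≥0) ω ≤ (K : ℝ)} := by
    ext ω; simp [IncBdd]
  rw [this]
  refine MeasurableSet.iUnion fun K => MeasurableSet.biInter S01_countable fun q hq => ?_
  have hq1 : (j : ℝ≥0) + q ≤ (a : ℝ≥0) := by
    have : (j : ℝ≥0) + q ≤ (j : ℝ≥0) + 1 := add_le_add_right hq.2 _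
    refine le_trans this ?_
    exact_mod_cast h
  exact measurableSet_le ((measurable_X_of_le X hq1).sub (measurable_X_of_le X hj))
    (@measurable_const _ _ _ (F X (a : ℝ≥0)) _)

lemma P_IncBdd (hX : IsLevy P X) (j : ℕ) :
    P (IncBdd X j) = P (BaseBdd X) := by
  have := K3' P X hX (j : ℝ≥0) S01 S01_countable Set.univ MeasurableSet.univ
  rw [Set.univ_inter, measure_univ, one_mul] at this
  exact this

lemma chainBdd (hX : IsLevy P X) :
    ∀ (m a : ℕ), P (⋂ j ∈ Finset.range m, IncBdd X (a + j)) = P (BaseBdd X) ^ m := by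
  intro m
  induction m with
  | zero => intro a; simp
  | succ m ih =>
    intro a
    have hsplit : (⋂ j ∈ Finset.range (m + 1), IncBdd X (a + j))
        = (⋂ j ∈ Finset.range m, IncBdd X (a + j)) ∩ IncBdd X (a + m) := by
      ext ω
      simp only [Set.mem_iInter, Set.mem_inter_iff, Finset.mem_range]
      constructor
      · intro h
        exact ⟨fun j hj => h j (Nat.lt_succ_of_lt hj), h m (Nat.lt_succ_self m)⟩
      · rintro ⟨h1, h2⟩ j hj
        rcases Nat.lt_succ_iff_lt_or_eq.1 hj with hj' | rfl
        · exact h1 j hj'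
        · exact h2
    set C := ⋂ j ∈ Finset.range m, IncBdd X (a + j) with hC
    have hCF : MeasurableSet[F X ((a + m : ℕ) : ℝ≥0)] C := by
      refine MeasurableSet.biInter (Set.to_countable _) fun j hj => ?_
      have hj' : j < m := by
        have : j ∈ Finset.range m := hj
        simpa using this
      exact IncBdd_mem_F X (by omega)
    have hK := K3' P X hX ((a + m : ℕ) : ℝ≥0) S01 S01_countable C hCF
    rw [hsplit]
    have heq : IncBdd X (a + m)
        = {ω | ∃ K : ℕ, ∀ q ∈ S01, X (((a + m : ℕ) : ℝ≥0) + q) ω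
            - X ((a + m : ℕ) : ℝ≥0) ω ≤ (K : ℝ)} := rfl
    rw [heq, hK, ih a, pow_succ]
    rfl

lemma P_BaseBdd_one (hX : IsLevy P X)
    (hdrift : ∀ᵐ ω ∂P, Tendsto (fun t => X t ω) atTop atBot) :
    P (BaseBdd X) = 1 := by
  by_contra hne
  have hlt : P (BaseBdd X) < 1 :=
    lt_of_le_of_ne prob_le_one hne
  -- the tail intersections are null
  have hTa : ∀ a : ℕ, P (⋂ j : ℕ, IncBdd X (a + j)) = 0 := by
    intro a
    have hle : ∀ m : ℕ, P (⋂ j : ℕ, IncBdd X (a + j)) ≤ P (BaseBdd X) ^ m := by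
      intro m
      rw [← chainBdd P X hX m a]
      refine measure_mono fun ω hω => ?_
      simp only [Set.mem_iInter] at hω ⊢
      intro j _
      exact hω j
    have htend := ENNReal.tendsto_pow_atTop_nhds_zero_of_lt_one hlt
    have := ge_of_tendsto htend (Filter.Eventually.of_forall hle)
    exact le_antisymm this zero_le
  have hUnull : P (⋃ a : ℕ, ⋂ j : ℕ, IncBdd X (a + j)) = 0 :=
    measure_iUnion_null fun a => hTa a
  -- the drift null set
  set Nd := toMeasurable P {ω | ¬ Tendsto (fun t => X t ω) atTop atBot} with hNd
  have hNdnull : P Nd = 0 := by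
    rw [hNd, measure_toMeasurable]
    exact hdrift
  have hbad : P ((⋃ a : ℕ, ⋂ j : ℕ, IncBdd X (a + j)) ∪ Nd) = 0 :=
    measure_union_null hUnull hNdnull
  -- find a point outside
  have hne' : ∃ ω, ω ∉ (⋃ a : ℕ, ⋂ j : ℕ, IncBdd X (a + j)) ∪ Nd := by
    by_contra hall
    push_neg at hall
    have : P Set.univ = 0 := by
      refine measure_mono_null (fun ω _ => hall ω) hbad
    simp [measure_univ] at this
  obtain ⟨ω, hω⟩ := hne'
  rw [Set.mem_union, not_or] at hω
  obtain ⟨hω1, hω2⟩ := hω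
  have hdω : Tendsto (fun t => X t ω) atTop atBot := by
    by_contra hc
    exact hω2 (subset_toMeasurable P _ hc)
  have hN : ∃ N : ℝ≥0, ∀ u ≥ N, X u ω ≤ 0 := by
    have := (hdω.eventually (eventually_le_atBot (0 : ℝ)))
    rw [eventually_atTop] at this
    exact this
  obtain ⟨N₀, hN₀⟩ := hN
  obtain ⟨a, ha⟩ := exists_nat_ge N₀
  rw [Set.mem_iUnion] at hω1
  push_neg at hω1
  have := hω1 a
  rw [Set.mem_iInter] at this
  push_neg at this
  obtain ⟨j, hj⟩ := this
  simp only [IncBdd, Set.mem_setOf_eq, not_exists] at hj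
  have hj' := hj (Nat.ceil (- (X ((a + j : ℕ) : ℝ≥0) ω)))
  push_neg at hj'
  obtain ⟨q, hqS, hgt⟩ := hj'
  have h1 : - (X ((a + j : ℕ) : ℝ≥0) ω) ≤ (Nat.ceil (- (X ((a + j : ℕ) : ℝ≥0) ω)) : ℝ) :=
    Nat.le_ceil _
  have h2 : X (((a + j : ℕ) : ℝ≥0) + q) ω > 0 := by
    have := hgt
    nlinarith [hgt, h1]
  have h3 : ((a + j : ℕ) : ℝ≥0) + q ≥ N₀ := by
    refine le_trans ha ?_
    refine le_trans ?_ le_self_add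
    exact_mod_cast Nat.le_add_right a j
  exact absurd (hN₀ _ h3) (not_le.2 h2)

lemma good_set (hX : IsLevy P X)
    (hdrift : ∀ᵐ ω ∂P, Tendsto (fun t => X t ω) atTop atBot) :
    ∃ G : Set Ω, MeasurableSet G ∧ P G = 1 ∧
      ∀ ω ∈ G, ∃ b : ℝ, 0 ≤ b ∧ ∀ t : ℝ≥0, X t ω ≤ b := by
  set Nd := toMeasurable P {ω | ¬ Tendsto (fun t => X t ω) atTop atBot} with hNd
  have hNdnull : P Nd = 0 := by rw [hNd, measure_toMeasurable]; exact hdrift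
  refine ⟨(⋂ j : ℕ, IncBdd X j) ∩ Ndᶜ, ?_, ?_, ?_⟩
  · exact ((MeasurableSet.iInter fun j => measurable_IncBdd X hX.measurable j)).inter
      (measurableSet_toMeasurable P _).compl
  · have hc : P (((⋂ j : ℕ, IncBdd X j) ∩ Ndᶜ)ᶜ) = 0 := by
      rw [Set.compl_inter, compl_compl]
      refine measure_union_null ?_ hNdnull
      rw [Set.compl_iInter]
      refine measure_iUnion_null fun j => ?_
      have hm : MeasurableSet (IncBdd X j) := measurable_IncBdd X hX.measurable j
      rw [measure_compl hm (measure_ne_top P _), P_IncBdd P X hX j,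
        P_BaseBdd_one P X hX hdrift]
      simp
    have hm : MeasurableSet ((⋂ j : ℕ, IncBdd X j) ∩ Ndᶜ) :=
      ((MeasurableSet.iInter fun j => measurable_IncBdd X hX.measurable j)).inter
        (measurableSet_toMeasurable P _).compl
    rw [← prob_compl_eq_zero_iff hm]
    exact hc
  · rintro ω ⟨hω1, hω2⟩
    have hdω : Tendsto (fun t => X t ω) atTop atBot := by
      by_contra hc
      exact hω2 (subset_toMeasurable P _ hc)
    rw [Set.mem_iInter] at hω1
    -- choose the block bounds
    choose K hK using hω1
    have hN : ∃ N₀ : ℝ≥0, ∀ u ≥ N₀, X u ω ≤ 0 := by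
      have := (hdω.eventually (eventually_le_atBot (0 : ℝ)))
      rw [eventually_atTop] at this
      exact this
    obtain ⟨N₀, hN₀⟩ := hN
    obtain ⟨N, hNa⟩ := exists_nat_ge N₀
    obtain ⟨b0, hb0⟩ := ((Finset.range N).image
      (fun j => X ((j : ℕ) : ℝ≥0) ω + (K j : ℝ))).bddAbove
    set b : ℝ := max b0 0 with hb
    have hrat : ∀ q ∈ Qset, X q ω ≤ b := by
      intro q hq
      by_cases hqN : (N : ℝ≥0) ≤ q
      · exact le_trans (hN₀ q (le_trans hNa hqN)) (le_max_right _ _)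
      · push_neg at hqN
        set j : ℕ := Nat.floor q with hj
        have hjq : (j : ℝ≥0) ≤ q := Nat.floor_le (zero_le (a := q))
        have hqj1 : q < (j : ℝ≥0) + 1 := by
          have := Nat.lt_floor_add_one q
          exact_mod_cast this
        have hjN : j < N := by
          rw [hj]
          rw [Nat.floor_lt (zero_le (a := q))]
          exact_mod_cast hqN
        have hq' : q - (j : ℝ≥0) ∈ S01 := by
          constructor
          · exact sub_mem_Qset hq (natCast_mem_Qset j)
          · simp only [Set.mem_Iic]
            exact tsub_le_iff_left.2 (le_of_lt hqj1)
        have hXq : X q ω = X ((j : ℝ≥0) + (q - (j : ℝ≥0))) ω := by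
          rw [add_tsub_cancel_of_le hjq]
        have := hK j (q - (j : ℝ≥0)) hq'
        have hmem : X ((j : ℕ) : ℝ≥0) ω + (K j : ℝ) ∈
            ((Finset.range N).image (fun j => X ((j : ℕ) : ℝ≥0) ω + (K j : ℝ)) : Finset ℝ) :=
          Finset.mem_image.2 ⟨j, Finset.mem_range.2 hjN, rfl⟩
        have hble := hb0 hmem
        rw [hXq]
        have : X ((j : ℝ≥0) + (q - (j : ℝ≥0))) ω ≤ X ((j : ℝ≥0)) ω + (K j : ℝ) := by
          linarith [hK j (q - (j : ℝ≥0)) hq']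
        refine le_trans this (le_trans hble (le_max_left _ _))
    refine ⟨b, le_max_right _ _, fun t => ?_⟩
    refine le_of_rat_right X hX.rightCont ω t b 1 one_pos fun q hq h1 _ => hrat q hq

lemma exists_tail_bound (hX : IsLevy P X)
    (hdrift : ∀ᵐ ω ∂P, Tendsto (fun t => X t ω) atTop atBot) :
    ∃ c : ℕ, 0 < P {ω | ∀ q ∈ Qset, X q ω ≤ (c : ℝ)} := by
  obtain ⟨G, hGm, hG1, hGb⟩ := good_set P X hX hdrift
  by_contra hc
  push_neg at hc
  simp only [le_zero_iff] at hc
  have hsub : G ⊆ ⋃ c : ℕ, {ω | ∀ q ∈ Qset, X q ω ≤ (c : ℝ)} := by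
    intro ω hω
    obtain ⟨b, hb0, hb⟩ := hGb ω hω
    refine Set.mem_iUnion.2 ⟨Nat.ceil b, fun q _ => le_trans (hb q) (Nat.le_ceil b)⟩
  have : P G = 0 := measure_mono_null hsub (measure_iUnion_null fun c => hc c)
  rw [hG1] at this
  simp at this


/-! ### A 0-1 law for the irregularity event -/

lemma PA_eq_mul_self (hX : IsLevy P X)
    (hnull : ∀ t : ℝ≥0, 0 < t → P {ω | X t ω = 0} = 0) :
    P (Aset X) = P (Aset X) * P (Aset X) := by
  classical
  have hAm : MeasurableSet (Aset X) := measurable_Aset X hX.measurable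
  -- Step 1 : P (Aset ∩ An n) = P Aset * P (An n)
  have S1 : ∀ n : ℕ, P (Aset X ∩ An X n) = P (Aset X) * P (An X n) := by
    intro n
    set u : ℝ≥0 := ((n : ℝ≥0) + 1)⁻¹ with hu
    have hupos : 0 < u := by positivity
    have hSne : (Qset ∩ Set.Ioc 0 u).Nonempty := by
      obtain ⟨q, hqQ, hq0, hqu⟩ := exists_qset_btwn hupos
      exact ⟨q, hqQ, hq0, le_of_lt hqu⟩
    obtain ⟨e, he⟩ := Set.Countable.exists_eq_range
      (Qset_countable.mono Set.inter_subset_left) hSne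
    have heQ : ∀ i, e i ∈ Qset ∩ Set.Ioc 0 u := by
      intro i; rw [he]; exact ⟨i, rfl⟩
    set Dm : ℕ → Set Ω := fun m => {ω | ∀ i ≤ m, X (e i) ω ≤ 0} with hDm
    have hDmeas : ∀ m, MeasurableSet (Dm m) := by
      intro m
      have : Dm m = ⋂ i ∈ {i : ℕ | i ≤ m}, {ω | X (e i) ω ≤ 0} := by
        ext ω; simp [hDm]
      rw [this]
      exact MeasurableSet.biInter (Set.to_countable _) fun i _ =>
        measurableSet_le (hX.measurable _) measurable_const
    -- finite stage
    have Sfin : ∀ m, P (Aset X ∩ Dm m) = P (Aset X) * P (Dm m) := by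
      intro m
      set Fm : Finset ℝ≥0 := (Finset.range (m + 1)).image e with hFm
      have hFne : Fm.Nonempty := ⟨e 0, Finset.mem_image.2 ⟨0, by simp, rfl⟩⟩
      set M : ℝ≥0 := Fm.min' hFne with hM
      have hMmem : M ∈ Fm := Fm.min'_mem hFne
      have hMpos : 0 < M := by
        obtain ⟨i, _, hi⟩ := Finset.mem_image.1 hMmem
        rw [← hi]
        exact (heQ i).2.1
      have hMle : ∀ i ≤ m, M ≤ e i := by
        intro i him
        exact Fm.min'_le _ (Finset.mem_image.2 ⟨i, Finset.mem_range.2 (Nat.lt_succ_of_le him), rfl⟩)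
      -- approximating sequence of small rational times
      have hchoice : ∀ k : ℕ, ∃ s : ℝ≥0,
          s ∈ Qset ∧ 0 < s ∧ s ≤ M ∧ s ≤ ((k : ℝ≥0) + 1)⁻¹ := by
        intro k
        have hpos : (0 : ℝ≥0) < min M ((k : ℝ≥0) + 1)⁻¹ := lt_min hMpos (by positivity)
        obtain ⟨s, hsQ, hs0, hslt⟩ := exists_qset_btwn hpos
        exact ⟨s, hsQ, hs0, le_of_lt (lt_of_lt_of_le hslt (min_le_left _ _)),
          le_of_lt (lt_of_lt_of_le hslt (min_le_right _ _))⟩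
      choose sk hskQ hsk0 hskM hskInv using hchoice
      set Shift : ℕ → Set Ω := fun k => {ω | ∀ i ≤ m, X (e i) ω - X (sk k) ω ≤ 0} with hShift
      have hShiftMeas : ∀ k, MeasurableSet (Shift k) := by
        intro k
        have : Shift k = ⋂ i ∈ {i : ℕ | i ≤ m}, {ω | X (e i) ω - X (sk k) ω ≤ 0} := by
          ext ω; simp [hShift]
        rw [this]
        exact MeasurableSet.biInter (Set.to_countable _) fun i _ =>
          measurableSet_le ((hX.measurable _).sub (hX.measurable _)) measurable_const
      -- factorization at each stage k
      have hstage : ∀ k, P (Aset X ∩ Shift k) = P (Aset X) * P (Shift k) := by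
        intro k
        set Sk' : Set ℝ≥0 := (fun x => x - sk k) '' (e '' {i : ℕ | i ≤ m}) with hSk'
        have hSk'c : Sk'.Countable :=
          (((Set.to_countable _).image e).image _)
        have hshift_eq : ∀ (ω : Ω),
            (∀ q' ∈ Sk', X (sk k + q') ω - X (sk k) ω ≤ (0:ℝ)) ↔ (ω ∈ Shift k) := by
          intro ω
          constructor
          · intro h i him
            have hmem : e i - sk k ∈ Sk' := ⟨e i, ⟨i, him, rfl⟩, rfl⟩
            have := h _ hmem
            rwa [add_tsub_cancel_of_le (le_trans (hskM k) (hMle i him))] at this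
          · rintro h q' ⟨x, ⟨i, him, rfl⟩, rfl⟩
            rw [add_tsub_cancel_of_le (le_trans (hskM k) (hMle i him))]
            exact h i him
        have h1 := K3 P X hX (sk k) Sk' hSk'c (fun _ => (0 : ℝ)) (Aset X)
          (Aset_mem_F X (hsk0 k))
        have h2 := K3 P X hX (sk k) Sk' hSk'c (fun _ => (0 : ℝ)) Set.univ
          MeasurableSet.univ
        rw [Set.univ_inter, measure_univ, one_mul] at h2
        have hSe : {ω | ∀ q ∈ Sk', X (sk k + q) ω - X (sk k) ω ≤ (fun _ => (0:ℝ)) q}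
            = Shift k := by
          ext ω
          exact hshift_eq ω
        rw [hSe] at h1 h2
        rw [h1, ← h2]
    -- pass k → ∞ using a.e. eventual equality of indicators
      have hnullset : P (⋃ i : Fin (m + 1), {ω | X (e i) ω = 0}) = 0 :=
        measure_iUnion_null fun i => hnull (e i) (heQ i).2.1
      have hae : ∀ᵐ ω ∂P, ω ∉ ⋃ i : Fin (m + 1), {ω | X (e i) ω = 0} :=
        measure_eq_zero_iff_ae_notMem.1 hnullset
      -- the small times tend to 0
      have htendS : Tendsto sk atTop (𝓝 (0 : ℝ≥0)) := by
        rw [← NNReal.tendsto_coe]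
        have hub : Tendsto (fun k : ℕ => ((k : ℝ) + 1)⁻¹) atTop (𝓝 0) :=
          tendsto_one_div_add_atTop_nhds_zero_nat.congr (fun k => by rw [one_div])
        refine tendsto_of_tendsto_of_tendsto_of_le_of_le tendsto_const_nhds hub
          (fun k => (sk k).2) (fun k => ?_)
        have := hskInv k
        exact_mod_cast this
      have htendX : ∀ ω, Tendsto (fun k => X (sk k) ω) atTop (𝓝 0) := by
        intro ω
        have hrc := (hX.rightCont ω 0).tendsto
        have hIci : Set.Ici (0 : ℝ≥0) = Set.univ := by
          ext x; simp [zero_le (a := x)]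
        rw [hIci, nhdsWithin_univ, hX.start ω] at hrc
        exact hrc.comp htendS
      -- eventual equality of indicators
      have heviff : ∀ᵐ ω ∂P, ∀ᶠ k in atTop, (ω ∈ Shift k ↔ ω ∈ Dm m) := by
        filter_upwards [hae] with ω hω
        have hne0 : ∀ i ≤ m, X (e i) ω ≠ 0 := by
          intro i hi h0
          exact hω (Set.mem_iUnion.2 ⟨⟨i, Nat.lt_succ_of_le hi⟩, h0⟩)
        set Fε : Finset ℝ := (Finset.range (m + 1)).image (fun i => |X (e i) ω|) with hFε
        have hFεne : Fε.Nonempty := ⟨|X (e 0) ω|, Finset.mem_image.2 ⟨0, by simp, rfl⟩⟩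
        set ε : ℝ := Fε.min' hFεne with hε
        have hεpos : 0 < ε := by
          obtain ⟨i, hi, hival⟩ := Finset.mem_image.1 (Fε.min'_mem hFεne)
          rw [hε, ← hival]
          exact abs_pos.2 (hne0 i (Nat.lt_succ_iff.1 (Finset.mem_range.1 hi)))
        have hεle : ∀ i ≤ m, ε ≤ |X (e i) ω| := by
          intro i him
          exact Fε.min'_le _ (Finset.mem_image.2
            ⟨i, Finset.mem_range.2 (Nat.lt_succ_of_le him), rfl⟩)
        have hev := (htendX ω).eventually_mem (Ioo_mem_nhds (neg_lt_zero.2 hεpos) hεpos)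
        filter_upwards [hev] with k hk
        constructor
        · intro hS i him
          have h1 := hS i him
          by_contra hpos
          push_neg at hpos
          have habs : |X (e i) ω| = X (e i) ω := abs_of_pos hpos
          have := hεle i him
          rw [habs] at this
          simp only [Set.mem_Ioo] at hk
          linarith
        · intro hD i him
          have hle0 := hD i him
          have hlt0 : X (e i) ω < 0 := lt_of_le_of_ne hle0 (hne0 i him)
          have habs : |X (e i) ω| = - X (e i) ω := abs_of_neg hlt0
          have := hεle i him
          rw [habs] at this
          simp only [Set.mem_Ioo] at hk
          linarith
      have hl1 := tendsto_measure_of_ae_eventually P (fun k => Aset X ∩ Shift k)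
        (Aset X ∩ Dm m) (fun k => hAm.inter (hShiftMeas k)) (hAm.inter (hDmeas m))
        (by filter_upwards [heviff] with ω h
            exact h.mono fun k hk => by
              simp only [Set.mem_inter_iff]
              exact and_congr Iff.rfl hk)
      have hl2 := tendsto_measure_of_ae_eventually P Shift (Dm m) hShiftMeas (hDmeas m) heviff
      have hl2' := ENNReal.Tendsto.const_mul (a := P (Aset X)) hl2
        (Or.inr (measure_ne_top P _))
      exact tendsto_nhds_unique ((Filter.tendsto_congr hstage).1 hl1) hl2'
    -- pass m → ∞
    have hiInter0 : (⋂ m, Dm m) = An X n := by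
      ext ω
      constructor
      · intro hω
        have h : ∀ m, ω ∈ Dm m := Set.mem_iInter.1 hω
        intro q hq
        have hq' : q ∈ Set.range e := by rw [← he]; exact hq
        obtain ⟨i, rfl⟩ := hq'
        exact h i i le_rfl
      · intro hω
        exact Set.mem_iInter.2 fun m i _ => hω (e i) (heQ i)
    have hiInter : (⋂ m, (Aset X ∩ Dm m)) = Aset X ∩ An X n := by
      rw [← Set.inter_iInter, hiInter0]
    have hmono1 : Antitone (fun m => Aset X ∩ Dm m) := by
      intro m1 m2 h
      exact Set.inter_subset_inter_right _ (fun ω hω i hi => hω i (le_trans hi h))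
    have hmono2 : Antitone Dm := fun m1 m2 h ω hω i hi => hω i (le_trans hi h)
    have hl1 : Tendsto (fun m => P (Aset X ∩ Dm m)) atTop (𝓝 (P (Aset X ∩ An X n))) := by
      rw [← hiInter]
      exact tendsto_measure_iInter_atTop
        (fun m => (hAm.inter (hDmeas m)).nullMeasurableSet) hmono1 ⟨0, measure_ne_top P _⟩
    have hl2 : Tendsto (fun m => P (Aset X) * P (Dm m)) atTop
        (𝓝 (P (Aset X) * P (An X n))) := by
      rw [← hiInter0]
      exact ENNReal.Tendsto.const_mul
        (tendsto_measure_iInter_atTop (fun m => (hDmeas m).nullMeasurableSet) hmono2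
          ⟨0, measure_ne_top P _⟩) (Or.inr (measure_ne_top P _))
    exact tendsto_nhds_unique ((Filter.tendsto_congr Sfin).1 hl1) hl2
  -- Step 2 : pass n → ∞
  have hmonoAn : Monotone (fun n => Aset X ∩ An X n) :=
    fun n1 n2 h => Set.inter_subset_inter_right _ (An_mono X h)
  have hU1 : (⋃ n, (Aset X ∩ An X n)) = Aset X := by
    rw [← Set.inter_iUnion]
    exact Set.inter_eq_left.2 (fun ω hω => hω)
  have hl1 : Tendsto (fun n => P (Aset X ∩ An X n)) atTop (𝓝 (P (Aset X))) := by
    have := tendsto_measure_iUnion_atTop (μ := P) hmonoAn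
    rwa [hU1] at this
  have hl2 : Tendsto (fun n => P (Aset X) * P (An X n)) atTop
      (𝓝 (P (Aset X) * P (Aset X))) := by
    have := tendsto_measure_iUnion_atTop (μ := P) (An_mono X)
    exact ENNReal.Tendsto.const_mul this (Or.inr (measure_ne_top P _))
  exact tendsto_nhds_unique ((Filter.tendsto_congr S1).1 hl1) hl2

lemma PA_zero_or_one (hX : IsLevy P X)
    (hnull : ∀ t : ℝ≥0, 0 < t → P {ω | X t ω = 0} = 0) :
    P (Aset X) = 0 ∨ P (Aset X) = 1 := by
  have h := PA_eq_mul_self P X hX hnull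
  by_cases h0 : P (Aset X) = 0
  · exact Or.inl h0
  · right
    have hne : P (Aset X) ≠ ⊤ := measure_ne_top P _
    exact (ENNReal.mul_eq_left h0 hne).1 h.symm

end Stmt5Aux

end


open Stmt5Aux

/-- For a Lévy process `X`, not compound Poisson, drifting to `−∞` (so
`X̄_∞ = sup_{t ≥ 0} X_t < ∞` a.s.), the law of `X̄_∞` has an atom at `0` if and only if `X` is
irregular upwards, i.e. `inf{t > 0 : X_t > 0} > 0` a.s. (equivalently: a.s. there is `ε > 0`
with `X_s ≤ 0` for all `s ∈ (0, ε)`). -/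
theorem stmt5 {Ω : Type*} {mΩ : MeasurableSpace Ω} (P : Measure Ω) [IsProbabilityMeasure P]
    (X : ℝ≥0 → Ω → ℝ) (hX : IsLevy P X)
    (hncp : ¬ IsCompoundPoisson P X)
    (hdrift : DriftsToNegInfty P X) :
    0 < P {ω | (⨆ t, X t ω) = 0} ↔
      ∀ᵐ ω ∂P, ∃ ε : ℝ≥0, 0 < ε ∧ ∀ s : ℝ≥0, 0 < s → s < ε → X s ω ≤ 0 := by

  have hm := hX.measurable
  have hnull : ∀ t : ℝ≥0, 0 < t → P {ω | X t ω = 0} = 0 := by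
    intro t ht
    by_contra h
    exact hncp ⟨t, ht, lt_of_le_of_ne zero_le (Ne.symm h)⟩
  obtain ⟨G, hGm, hG1, hGb⟩ := good_set P X hX hdrift
  constructor
  · -- forward
    intro hpos
    have hsub : {ω | (⨆ t, X t ω) = 0} ∩ G ⊆ Aset X := by
      rintro ω ⟨hsup, hG⟩
      obtain ⟨b, _, hb⟩ := hGb ω hG
      have hBdd : BddAbove (Set.range fun t => X t ω) := by
        refine ⟨b, ?_⟩
        rintro x ⟨t, rfl⟩
        exact hb t
      have hle : ∀ t, X t ω ≤ 0 := by
        intro t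
        have h1 := le_ciSup hBdd t
        have h2 : (⨆ t, X t ω) = 0 := hsup
        rwa [h2] at h1
      exact Set.mem_iUnion.2 ⟨0, fun q _ => hle q⟩
    have h2 : 0 < P (Aset X) := by
      have hGc : P Gᶜ = 0 := by
        rw [measure_compl hGm (measure_ne_top P _), hG1]
        simp
      have hsplit : P {ω | (⨆ t, X t ω) = 0}
          ≤ P ({ω | (⨆ t, X t ω) = 0} ∩ G) + P Gᶜ := by
        refine le_trans (measure_mono ?_) (measure_union_le _ _)
        intro ω hω
        by_cases hg : ω ∈ G
        · exact Or.inl ⟨hω, hg⟩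
        · exact Or.inr hg
      rw [hGc, add_zero] at hsplit
      exact lt_of_lt_of_le hpos (le_trans hsplit (measure_mono hsub))
    have hA1 : P (Aset X) = 1 := by
      rcases PA_zero_or_one P X hX hnull with h | h
      · rw [h] at h2; exact absurd h2 (lt_irrefl 0)
      · exact h
    have hAc : P (Aset X)ᶜ = 0 := by
      rw [measure_compl (measurable_Aset X hm) (measure_ne_top P _), hA1]
      simp
    rw [ae_iff]
    refine measure_mono_null ?_ hAc
    intro ω hω
    simp only [Set.mem_setOf_eq, not_exists, not_and] at hω
    intro hA
    obtain ⟨n, hn⟩ := Set.mem_iUnion.1 hA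
    have hεpos : (0 : ℝ≥0) < ((n : ℝ≥0) + 1)⁻¹ := by positivity
    refine hω (((n : ℝ≥0) + 1)⁻¹) hεpos ?_
    intro s hs0 hsε
    refine le_of_rat_right X hX.rightCont ω s 0 (((n : ℝ≥0) + 1)⁻¹ - s)
      (tsub_pos_of_lt hsε) ?_
    intro q hqQ hq1 hq2
    rw [add_tsub_cancel_of_le (le_of_lt hsε)] at hq2
    exact hn q ⟨hqQ, lt_trans hs0 hq1, le_of_lt hq2⟩
  · -- backward
    intro hae
    classical
    -- a.e. ω is in Aset
    have haeA : ∀ᵐ ω ∂P, ω ∈ Aset X := by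
      filter_upwards [hae] with ω hω
      obtain ⟨ε, hε0, hεs⟩ := hω
      obtain ⟨n, hn⟩ := exists_nat_gt (ε⁻¹ : ℝ≥0)
      have hlt : ((n : ℝ≥0) + 1)⁻¹ < ε := by
        rw [inv_lt_comm₀ (by positivity) hε0]
        exact lt_trans hn (lt_add_one _)
      refine Set.mem_iUnion.2 ⟨n, fun q hq => ?_⟩
      exact hεs q hq.2.1 (lt_of_le_of_lt hq.2.2 hlt)
    have hA1 : P (Aset X) = 1 := by
      rw [← prob_compl_eq_zero_iff (measurable_Aset X hm)]
      rw [ae_iff] at haeA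
      exact haeA
    -- some An has positive probability
    have hex : ∃ n : ℕ, P (An X n) ≠ 0 := by
      by_contra h
      push_neg at h
      have : P (Aset X) = 0 := measure_iUnion_null fun n => h n
      rw [hA1] at this
      simp at this
    obtain ⟨n, hAn0⟩ := hex
    set t₀ : ℝ≥0 := ((n : ℝ≥0) + 1)⁻¹ with ht₀def
    have ht₀pos : 0 < t₀ := by rw [ht₀def]; positivity
    have ht₀Q : t₀ ∈ Qset := by
      refine ⟨((n : ℚ) + 1)⁻¹, ?_⟩
      rw [ht₀def]
      push_cast
      simp
    have ht₀mem : t₀ ∈ Qset ∩ Set.Ioc 0 t₀ := ⟨ht₀Q, ht₀pos, le_rfl⟩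
    -- An n forces X t₀ ≤ 0, and X t₀ = 0 is null, so some strictly negative level
    have hAnsub : An X n ⊆ {ω | X t₀ ω ≤ 0} := fun ω hω => hω t₀ ht₀mem
    have hAnlt : P (An X n ∩ {ω | X t₀ ω < 0}) ≠ 0 := by
      intro h0
      have hsubd : An X n ⊆ (An X n ∩ {ω | X t₀ ω < 0}) ∪ {ω | X t₀ ω = 0} := by
        intro ω hω
        have hle0 : X t₀ ω ≤ 0 := hAnsub hω
        rcases hle0.lt_or_eq with h | h
        · exact Or.inl ⟨hω, h⟩
        · exact Or.inr h
      have h1 : P (An X n) ≤ P ((An X n ∩ {ω | X t₀ ω < 0}) ∪ {ω | X t₀ ω = 0}) :=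
        measure_mono hsubd
      have h2 := measure_union_le (μ := P) (An X n ∩ {ω | X t₀ ω < 0}) {ω | X t₀ ω = 0}
      have := le_trans h1 h2
      rw [h0, hnull t₀ ht₀pos, add_zero] at this
      exact hAn0 (le_antisymm this zero_le)
    have hexc : ∃ c₀ : ℕ, P (An X n ∩ {ω | X t₀ ω ≤ -(1 / ((c₀ : ℝ) + 1))}) ≠ 0 := by
      by_contra h
      push_neg at h
      have hsubc : An X n ∩ {ω | X t₀ ω < 0}
          ⊆ ⋃ c : ℕ, (An X n ∩ {ω | X t₀ ω ≤ -(1 / ((c : ℝ) + 1))}) := by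
        rintro ω ⟨hω1, hω2⟩
        obtain ⟨c, hc⟩ := exists_nat_one_div_lt (show (0:ℝ) < -X t₀ ω by simp only [Set.mem_setOf_eq] at hω2; linarith)
        refine Set.mem_iUnion.2 ⟨c, hω1, ?_⟩
        simp only [Set.mem_setOf_eq]
        linarith [hc]
      exact hAnlt (measure_mono_null hsubc (measure_iUnion_null fun c => h c))
    obtain ⟨c₀, hc₀⟩ := hexc
    set γ : ℝ := 1 / ((c₀ : ℝ) + 1) with hγdef
    have hγpos : 0 < γ := by rw [hγdef]; positivity
    set β : ℝ≥0 → ℝ := fun q => if q = t₀ then -γ else 0 with hβdef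
    have hβt₀ : β t₀ = -γ := by rw [hβdef]; simp
    have hβle : ∀ q, β q ≤ 0 := by
      intro q
      rw [hβdef]
      by_cases h : q = t₀ <;> simp [h] <;> linarith
    set S₀ : Set ℝ≥0 := Qset ∩ Set.Ioc 0 t₀ with hS₀def
    have hS₀c : S₀.Countable := Qset_countable.mono Set.inter_subset_left
    set Blk0 : Set Ω := {ω | ∀ q ∈ S₀, X q ω ≤ β q} with hBlk0def
    have hr0 : P Blk0 ≠ 0 := by
      intro h0
      refine hc₀ (measure_mono_null ?_ h0)
      rintro ω ⟨hω1, hω2⟩ q hq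
      rw [hβdef]
      by_cases hqt : q = t₀
      · subst hqt
        simpa using hω2
      · simp only [hqt, if_false]
        exact hω1 q hq
    set r : ℝ≥0∞ := P Blk0 with hrdef
    -- tail bound
    obtain ⟨c', hc'⟩ := exists_tail_bound P X hX hdrift
    -- blocks
    set Blk : ℕ → Set Ω := fun i =>
      {ω | ∀ q ∈ S₀, X ((i : ℝ≥0) * t₀ + q) ω - X ((i : ℝ≥0) * t₀) ω ≤ β q} with hBlkdef
    have hBlkF : ∀ i a : ℕ, i + 1 ≤ a → MeasurableSet[F X ((a : ℝ≥0) * t₀)] (Blk i) := by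
      intro i a hia
      have heq : Blk i = ⋂ q ∈ S₀,
          {ω | X ((i : ℝ≥0) * t₀ + q) ω - X ((i : ℝ≥0) * t₀) ω ≤ β q} := by
        ext ω; simp [hBlkdef]
      rw [heq]
      refine MeasurableSet.biInter hS₀c fun q hq => ?_
      have h1 : (i : ℝ≥0) * t₀ + q ≤ (a : ℝ≥0) * t₀ := by
        have hq' : q ≤ t₀ := hq.2.2
        have : (i : ℝ≥0) * t₀ + q ≤ (i : ℝ≥0) * t₀ + t₀ := add_le_add_right hq' _
        refine le_trans this ?_
        have : ((i : ℝ≥0) + 1) * t₀ ≤ (a : ℝ≥0) * t₀ := by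
          refine mul_le_mul_left ?_ t₀
          exact_mod_cast hia
        refine le_trans (le_of_eq (by ring)) this
      have h2 : (i : ℝ≥0) * t₀ ≤ (a : ℝ≥0) * t₀ := by
        refine mul_le_mul_left ?_ t₀
        exact_mod_cast le_trans (Nat.le_succ i) hia
      exact measurableSet_le ((measurable_X_of_le X h1).sub (measurable_X_of_le X h2))
        (@measurable_const _ _ _ (F X ((a : ℝ≥0) * t₀)) _)
    have hchain : ∀ k : ℕ, P (⋂ i ∈ Finset.range k, Blk i) = r ^ k := by
      intro k
      induction k with
      | zero => simp
      | succ k ih =>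
        have hsplit : (⋂ i ∈ Finset.range (k + 1), Blk i)
            = (⋂ i ∈ Finset.range k, Blk i) ∩ Blk k := by
          ext ω
          simp only [Set.mem_iInter, Set.mem_inter_iff, Finset.mem_range]
          constructor
          · intro h
            exact ⟨fun i hi => h i (Nat.lt_succ_of_lt hi), h k (Nat.lt_succ_self k)⟩
          · rintro ⟨h1, h2⟩ i hi
            rcases Nat.lt_succ_iff_lt_or_eq.1 hi with hi' | rfl
            · exact h1 i hi'
            · exact h2
        set C := ⋂ i ∈ Finset.range k, Blk i with hCdef
        have hCF : MeasurableSet[F X ((k : ℝ≥0) * t₀)] C := by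
          refine MeasurableSet.biInter (Set.to_countable _) fun i hi => ?_
          have hi' : i < k := by
            have : i ∈ Finset.range k := hi
            simpa using this
          exact hBlkF i k (by omega)
        have hK := K3 P X hX ((k : ℝ≥0) * t₀) S₀ hS₀c β C hCF
        rw [hsplit]
        have heq : Blk k = {ω | ∀ q ∈ S₀,
            X ((k : ℝ≥0) * t₀ + q) ω - X ((k : ℝ≥0) * t₀) ω ≤ β q} := rfl
        rw [heq, hK, ih, pow_succ]
    set K : ℕ := (c₀ + 1) * (c' + 1) with hKdef
    have hK1 : 1 ≤ K :=
      Nat.one_le_iff_ne_zero.2 (Nat.mul_ne_zero (Nat.succ_ne_zero c₀) (Nat.succ_ne_zero c'))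
    set T : ℝ≥0 := (K : ℝ≥0) * t₀ with hTdef
    have hTQ : T ∈ Qset := nsmul_mem_Qset ht₀Q K
    set TailB : Set Ω := {ω | ∀ q ∈ Qset, X q ω ≤ (c' : ℝ)} with hTailBdef
    set Tail : Set Ω := {ω | ∀ q ∈ Qset, X (T + q) ω - X T ω ≤ (c' : ℝ)} with hTaildef
    have hCKF : MeasurableSet[F X T] (⋂ i ∈ Finset.range K, Blk i) := by
      refine MeasurableSet.biInter (Set.to_countable _) fun i hi => ?_
      have hi' : i < K := by
        have : i ∈ Finset.range K := hi
        simpa using this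
      exact hBlkF i K (by omega)
    have hPT : P ((⋂ i ∈ Finset.range K, Blk i) ∩ Tail) = r ^ K * P TailB := by
      have := K3 P X hX T Qset Qset_countable (fun _ => (c' : ℝ))
        (⋂ i ∈ Finset.range K, Blk i) hCKF
      rw [this, hchain K]
    have hPTpos : 0 < P ((⋂ i ∈ Finset.range K, Blk i) ∩ Tail) := by
      rw [hPT]
      refine ENNReal.mul_pos (pow_ne_zero K hr0) ?_
      exact ne_of_gt hc'
    -- pointwise: on the event, the whole path stays ≤ 0
    have hsubfin : (⋂ i ∈ Finset.range K, Blk i) ∩ Tail ⊆ {ω | (⨆ t, X t ω) = 0} := by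
      rintro ω ⟨hBlks, hTail⟩
      have hBlk : ∀ i, i < K → ω ∈ Blk i := by
        intro i hi
        exact Set.mem_iInter₂.1 hBlks i (Finset.mem_range.2 hi)
      -- the ladder bound at block ends
      have hc1 : ∀ i : ℕ, i ≤ K → X ((i : ℝ≥0) * t₀) ω ≤ -(i : ℝ) * γ := by
        intro i
        induction i with
        | zero => intro _; simp [hX.start ω]
        | succ i ih =>
          intro hik
          have hiK : i < K := hik
          have hIH := ih (le_of_lt hiK)
          have hstep := hBlk i hiK t₀ ht₀mem
          rw [hβt₀] at hstep
          have hcast : ((i + 1 : ℕ) : ℝ≥0) * t₀ = (i : ℝ≥0) * t₀ + t₀ := by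
            push_cast
            ring
          rw [hcast]
          have hfin : X ((i : ℝ≥0) * t₀ + t₀) ω ≤ X ((i : ℝ≥0) * t₀) ω - γ := by
            linarith
          push_cast
          linarith
      -- every time is dominated by 0
      have hle : ∀ t : ℝ≥0, X t ω ≤ 0 := by
        intro t
        by_cases htT : T < t
        · -- tail regime
          refine le_of_rat_right X hX.rightCont ω t 0 1 one_pos ?_
          intro q hqQ hq1 _
          have hTq : T ≤ q := le_of_lt (lt_trans htT hq1)
          have hq' : q - T ∈ Qset := sub_mem_Qset hqQ hTQ
          have := hTail (q - T) hq'
          rw [add_tsub_cancel_of_le hTq] at this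
          have hXT := hc1 K le_rfl
          have hKγ : (K : ℝ) * γ = (c' : ℝ) + 1 := by
            rw [hKdef, hγdef]
            push_cast
            field_simp
          rw [← hTdef] at hXT
          nlinarith [this, hXT, hKγ]
        · -- before time T
          push_neg at htT
          by_cases ht0 : t = 0
          · rw [ht0, hX.start ω]
          have htpos : 0 < t := pos_iff_ne_zero.2 ht0
          set j : ℕ := Nat.ceil (t / t₀) with hjdef
          have hjub : t ≤ (j : ℝ≥0) * t₀ := by
            have h1 : t / t₀ ≤ (j : ℝ≥0) := Nat.le_ceil _
            calc t = (t / t₀) * t₀ := by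
                  rw [div_mul_cancel₀]
                  exact ne_of_gt ht₀pos
            _ ≤ (j : ℝ≥0) * t₀ := mul_le_mul_left h1 t₀
          have hjK : j ≤ K := by
            rw [hjdef]
            refine Nat.ceil_le.2 ?_
            rw [div_le_iff₀ ht₀pos]
            rw [hTdef] at htT
            exact htT
          have hj1 : 1 ≤ j := by
            rw [hjdef]
            refine Nat.one_le_ceil_iff.2 ?_
            positivity
          set i : ℕ := j - 1 with hidef
          have hij : i + 1 = j := by omega
          have hilt : (i : ℝ≥0) * t₀ < t := by
            have h2 : ((j : ℝ≥0) : ℝ≥0) < t / t₀ + 1 := by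
              have := Nat.ceil_lt_add_one (zero_le (a := t / t₀))
              rw [← hjdef] at this
              exact_mod_cast this
            have h3 : (i : ℝ≥0) < t / t₀ := by
              have hcast : (i : ℝ≥0) + 1 = (j : ℝ≥0) := by
                exact_mod_cast congrArg (Nat.cast : ℕ → ℝ≥0) hij
              calc (i : ℝ≥0) = ((i : ℝ≥0) + 1) - 1 := by simp
              _ = (j : ℝ≥0) - 1 := by rw [hcast]
              _ < t / t₀ + 1 - 1 := by
                  refine tsub_lt_tsub_right_of_le ?_ h2
                  exact_mod_cast hj1
              _ = t / t₀ := by simp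
            calc (i : ℝ≥0) * t₀ < (t / t₀) * t₀ := by
                  exact mul_lt_mul_of_pos_right h3 ht₀pos
            _ = t := by rw [div_mul_cancel₀]; exact ne_of_gt ht₀pos
          have hiQ : (i : ℝ≥0) * t₀ ∈ Qset := nsmul_mem_Qset ht₀Q i
          have hjt : (j : ℝ≥0) * t₀ = (i : ℝ≥0) * t₀ + t₀ := by
            rw [← hij]
            push_cast
            ring
          rcases eq_or_lt_of_le hjub with heq | hlt
          · -- t is exactly a block end
            rw [heq]
            have := hc1 j hjK
            have hjγ : (0:ℝ) ≤ (j : ℝ) * γ := by positivity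
            linarith
          · -- strictly inside a block
            refine le_of_rat_right X hX.rightCont ω t 0 ((j : ℝ≥0) * t₀ - t) (tsub_pos_of_lt hlt) ?_
            intro q hqQ hq1 hq2
            rw [add_tsub_cancel_of_le (le_of_lt hlt)] at hq2
            have hiq : (i : ℝ≥0) * t₀ < q := lt_trans hilt hq1
            have hq' : q - (i : ℝ≥0) * t₀ ∈ S₀ := by
              refine ⟨sub_mem_Qset hqQ hiQ, tsub_pos_of_lt hiq, ?_⟩
              rw [tsub_le_iff_left]
              rw [hjt] at hq2
              exact le_of_lt hq2
            have hstep := hBlk i (by omega) (q - (i : ℝ≥0) * t₀) hq'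
            rw [add_tsub_cancel_of_le (le_of_lt hiq)] at hstep
            have hbase := hc1 i (by omega)
            have hβq := hβle (q - (i : ℝ≥0) * t₀)
            have hiγ : (0:ℝ) ≤ (i : ℝ) * γ := by positivity
            linarith
      -- conclude the supremum is 0
      have h1 : (⨆ t, X t ω) ≤ 0 := ciSup_le hle
      have hBdd : BddAbove (Set.range fun t => X t ω) := by
        refine ⟨0, ?_⟩
        rintro x ⟨t, rfl⟩
        exact hle t
      have h2 : (0 : ℝ) ≤ ⨆ t, X t ω := by
        have := le_ciSup hBdd (0 : ℝ≥0)
        rwa [hX.start ω] at this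
      exact le_antisymm h1 h2
    exact lt_of_lt_of_le hPTpos (measure_mono hsubfin)
end

section
/- For a Brownian motion with drift X_t = σB_t + μt with σ > 0 and μ < 0, the equation e^{−2μy/σ²} − 1 + (4μ/σ²) y = 0 has a unique solution y* in (0, ∞), and y* > (σ²/(−2μ)) log 2. -/
noncomputable def hhAux (t : ℝ) : ℝ := Real.exp t - 1 - 2 * t

lemma hhAux_hasDerivAt (x : ℝ) : HasDerivAt hhAux (Real.exp x - 2) x := by
  have h2 : hhAux = fun t => Real.exp t - 1 - 2 * t := rfl
  rw [h2]
  have := ((Real.hasDerivAt_exp x).sub_const 1).sub ((hasDerivAt_id x).const_mul 2)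
  have e : ((fun x => Real.exp x - 1) - fun y => 2 * id y) = fun t => Real.exp t - 1 - 2 * t := by
    funext t; simp
  rw [e, mul_one] at this
  exact this

lemma hhAux_cont : Continuous hhAux := by
  unfold hhAux; continuity

lemma hhAux_neg {t : ℝ} (ht : 0 < t) (ht2 : t ≤ Real.log 2) : hhAux t < 0 := by
  have hanti : StrictAntiOn hhAux (Set.Icc 0 (Real.log 2)) := by
    apply strictAntiOn_of_deriv_neg (convex_Icc _ _) hhAux_cont.continuousOn
    intro x hx
    rw [interior_Icc] at hx
    have hxe : Real.exp x < 2 := by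
      calc Real.exp x < Real.exp (Real.log 2) := Real.exp_lt_exp.2 hx.2
        _ = 2 := Real.exp_log (by norm_num)
    rw [(hhAux_hasDerivAt x).deriv]
    linarith
  have h0 : (0 : ℝ) ∈ Set.Icc (0 : ℝ) (Real.log 2) :=
    Set.mem_Icc.2 ⟨le_refl 0, Real.log_nonneg (by norm_num)⟩
  have ht' : t ∈ Set.Icc (0 : ℝ) (Real.log 2) := Set.mem_Icc.2 ⟨ht.le, ht2⟩
  have := hanti h0 ht' ht
  simpa [hhAux] using this

lemma hhAux_mono : StrictMonoOn hhAux (Set.Ici (Real.log 2)) := by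
  apply strictMonoOn_of_deriv_pos (convex_Ici _) hhAux_cont.continuousOn
  intro x hx
  rw [interior_Ici] at hx
  have hxe : (2 : ℝ) < Real.exp x := by
    calc (2 : ℝ) = Real.exp (Real.log 2) := (Real.exp_log (by norm_num)).symm
      _ < Real.exp x := Real.exp_lt_exp.2 hx
  rw [(hhAux_hasDerivAt x).deriv]
  linarith

lemma hhAux_root_gt {t : ℝ} (ht : 0 < t) (hz : hhAux t = 0) : Real.log 2 < t := by
  by_contra hle
  push_neg at hle
  exact absurd hz (ne_of_lt (hhAux_neg ht hle))

lemma hhAux_exists_root : ∃ t ∈ Set.Ioo (Real.log 2) 2, hhAux t = 0 := by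
  have hlog : (0.6931471803 : ℝ) < Real.log 2 := Real.log_two_gt_d9
  have hlog2 : Real.log 2 ≤ 2 := by
    have := Real.log_le_sub_one_of_pos (show (0:ℝ) < 2 by norm_num)
    linarith
  have hneg : hhAux (Real.log 2) < 0 := by
    simp only [hhAux, Real.exp_log (show (0:ℝ) < 2 by norm_num)]
    linarith
  have hpos : 0 < hhAux 2 := by
    have he1 : (2.7182818283 : ℝ) < Real.exp 1 := Real.exp_one_gt_d9
    have he2 : Real.exp 2 = Real.exp 1 * Real.exp 1 := by
      rw [← Real.exp_add]; norm_num
    simp only [hhAux]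
    nlinarith
  have := intermediate_value_Ioo hlog2 hhAux_cont.continuousOn
  have h0 : (0 : ℝ) ∈ Set.Ioo (hhAux (Real.log 2)) (hhAux 2) := ⟨hneg, hpos⟩
  obtain ⟨t, ht, hteq⟩ := this h0
  exact ⟨t, ht, hteq⟩

/-- For a Brownian motion with drift `X_t = σB_t + μt`, `σ > 0`, `μ < 0`, the equation
`e^{−2μy/σ²} − 1 + (4μ/σ²) y = 0` has a unique solution `y*` in `(0, ∞)`, and
`y* > (σ²/(−2μ)) log 2` (the median of the exponential law of the ultimate supremum). -/
theorem stmt12 (σ μ : ℝ) (hσ : 0 < σ) (hμ : μ < 0) :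
    (∃! y : ℝ, 0 < y ∧ Real.exp (-(2 * μ * y / σ ^ 2)) - 1 + (4 * μ / σ ^ 2) * y = 0) ∧
    ∀ y : ℝ, 0 < y → Real.exp (-(2 * μ * y / σ ^ 2)) - 1 + (4 * μ / σ ^ 2) * y = 0 →
      (σ ^ 2 / (-(2 * μ))) * Real.log 2 < y := by
  have hσ2 : (0 : ℝ) < σ ^ 2 := by positivity
  set a : ℝ := -(2 * μ) / σ ^ 2 with ha_def
  have ha : 0 < a := by
    apply div_pos (by linarith) hσ2
  -- The equation in terms of hhAux
  have key : ∀ y : ℝ,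
      Real.exp (-(2 * μ * y / σ ^ 2)) - 1 + (4 * μ / σ ^ 2) * y = hhAux (a * y) := by
    intro y
    have e1 : -(2 * μ * y / σ ^ 2) = a * y := by
      rw [ha_def]; field_simp
    have e2 : (4 * μ / σ ^ 2) * y = -(2 * (a * y)) := by
      rw [ha_def]; field_simp; ring
    rw [e1, e2, hhAux]
    ring
  obtain ⟨t, ht, hteq⟩ := hhAux_exists_root
  have hlogpos : (0 : ℝ) < Real.log 2 := Real.log_pos (by norm_num)
  have htpos : 0 < t := lt_trans hlogpos ht.1
  refine ⟨⟨t / a, ⟨div_pos htpos ha, ?_⟩, ?_⟩, ?_⟩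
  · rw [key]
    rw [mul_div_cancel₀ _ (ne_of_gt ha)]
    exact hteq
  · rintro z ⟨hzpos, hzeq⟩
    rw [key] at hzeq
    have hazpos : 0 < a * z := mul_pos ha hzpos
    have haz : Real.log 2 < a * z := hhAux_root_gt hazpos hzeq
    have hz2 : a * z = t := hhAux_mono.injOn (Set.mem_Ici.2 haz.le)
      (Set.mem_Ici.2 ht.1.le) (by rw [hzeq, hteq])
    rw [eq_div_iff (ne_of_gt ha)]
    linarith [hz2]
  · intro y hy hyeq
    rw [key] at hyeq
    have haypos : 0 < a * y := mul_pos ha hy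
    have hay : Real.log 2 < a * y := hhAux_root_gt haypos hyeq
    have hinv : σ ^ 2 / (-(2 * μ)) = 1 / a := by
      rw [ha_def]; field_simp
    rw [hinv, one_div, inv_mul_eq_div, div_lt_iff₀ ha]
    linarith [hay]
end
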